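/- Let P ⊂ ℝ^d be a locally anti-blocking lattice polytope with 0 in its interior. Then P is reflexive if and only if P ∩ σℝ^d_{≥0} is compressed (equivalently, has facet width one) for every σ ∈ {−1,+1}^d. -/

import Mathlib

open Finset

/-- Dot product on `ℝ^d`. -/
def dot {d : ℕ} (x y : Fin d → ℝ) : ℝ := ∑ i, x i * y i

/-- Coordinatewise absolute value. -/
def absVec {d : ℕ} (p : Fin d → ℝ) : Fin d → ℝ := fun i => |p i|

/-- A vector of signs `±1`. -/
def IsSignVec {d : ℕ} (σ : Fin d → ℝ) : Prop := ∀ i, σ i = 1 ∨ σ i = -1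

/-- Coordinatewise sign flip. -/
def sflip {d : ℕ} (σ p : Fin d → ℝ) : Fin d → ℝ := fun i => σ i * p i

/-- A set is unconditional if it is closed under coordinate sign flips. -/
def Unconditional {d : ℕ} (K : Set (Fin d → ℝ)) : Prop :=
  ∀ σ : Fin d → ℝ, IsSignVec σ → ∀ p ∈ K, sflip σ p ∈ K

/-- A (nonempty) polytope: the convex hull of a nonempty finite set. -/
def IsPolytope {d : ℕ} (P : Set (Fin d → ℝ)) : Prop :=
  ∃ V : Finset (Fin d → ℝ), V.Nonempty ∧ P = convexHull ℝ (V : Set (Fin d → ℝ))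

/-- The nonnegative orthant of `ℝ^d`. -/
def nonnegOrthant (d : ℕ) : Set (Fin d → ℝ) := {x | ∀ i, 0 ≤ x i}

/-- An anti-blocking polytope: a polytope in the nonnegative orthant that is
down-closed with respect to the componentwise order. -/
def IsAntiBlocking {d : ℕ} (P : Set (Fin d → ℝ)) : Prop :=
  IsPolytope P ∧ P ⊆ nonnegOrthant d ∧
    ∀ q ∈ P, ∀ p : Fin d → ℝ, (∀ i, 0 ≤ p i ∧ p i ≤ q i) → p ∈ P

/-- The unconditional set associated to a set `P`: all points whose vector of
absolute values lies in `P`. -/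
def UPoly {d : ℕ} (P : Set (Fin d → ℝ)) : Set (Fin d → ℝ) := {p | absVec p ∈ P}

/-- Cast an integer vector to a real vector. -/
def intCast {d : ℕ} (a : Fin d → ℤ) : Fin d → ℝ := fun i => (a i : ℝ)

/-- A lattice polytope: convex hull of a nonempty finite set of integer points. -/
def IsLatticePolytope {d : ℕ} (P : Set (Fin d → ℝ)) : Prop :=
  ∃ V : Finset (Fin d → ℤ), V.Nonempty ∧ P = convexHull ℝ (intCast '' (V : Set (Fin d → ℤ)))

/-- Reflexive polytope: `0` is interior and `P` is cut out by integral
inequalities with right-hand side `1`. -/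
def IsReflexive {d : ℕ} (P : Set (Fin d → ℝ)) : Prop :=
  0 ∈ interior P ∧
    ∃ A : Finset (Fin d → ℤ), P = {x | ∀ a ∈ A, dot (intCast a) x ≤ 1}

/-- A facet-defining valid inequality: the inequality is valid on `Q` and the
touching set spans an affine subspace of dimension `d - 1`. -/
def IsFacetIneq {d : ℕ} (Q : Set (Fin d → ℝ)) (a : Fin d → ℤ) (b : ℝ) : Prop :=
  (∀ x ∈ Q, dot (intCast a) x ≤ b) ∧
    Module.finrank ℝ (vectorSpan ℝ {x | x ∈ Q ∧ dot (intCast a) x = b}) = d - 1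

/-- Facet width one: for every facet-defining primitive integral inequality, the
values of the corresponding linear functional on `Q` span an interval of
length `1`.  This characterizes compressed lattice polytopes. -/
def HasFacetWidthOne {d : ℕ} (Q : Set (Fin d → ℝ)) : Prop :=
  ∀ (a : Fin d → ℤ) (b : ℝ), Finset.univ.gcd a = 1 → IsFacetIneq Q a b →
    sSup ((fun x => dot (intCast a) x) '' Q) -
      sInf ((fun x => dot (intCast a) x) '' Q) = 1

section Infra

variable {d : ℕ}

local notation "E" => Fin d → ℝ

@[simp] lemma intCastVec_apply {d : ℕ} (a : Fin d → ℤ) (i : Fin d) : intCast a i = ((a i : ℤ) : ℝ) := rfl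

lemma dot_add (a x y : Fin d → ℝ) : dot a (x + y) = dot a x + dot a y := by
  simp [dot, mul_add, Finset.sum_add_distrib]

lemma dot_smul (a : Fin d → ℝ) (c : ℝ) (x : Fin d → ℝ) : dot a (c • x) = c * dot a x := by
  simp only [dot, Pi.smul_apply, smul_eq_mul, Finset.mul_sum]
  exact Finset.sum_congr rfl fun i _ => by ring

lemma dot_zero (a : Fin d → ℝ) : dot a 0 = 0 := by simp [dot]

lemma dot_comm (a x : Fin d → ℝ) : dot a x = dot x a := by
  simp [dot, mul_comm]

lemma dot_sub (a x y : Fin d → ℝ) : dot a (x - y) = dot a x - dot a y := by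
  simp [dot, mul_sub, Finset.sum_sub_distrib]

lemma dot_neg (a x : Fin d → ℝ) : dot a (-x) = - dot a x := by
  simp [dot]

/-- `dot a` as a linear map. -/
def dotLM (a : Fin d → ℝ) : (Fin d → ℝ) →ₗ[ℝ] ℝ where
  toFun := dot a
  map_add' x y := dot_add a x y
  map_smul' c x := dot_smul a c x

@[simp] lemma dotLM_apply (a x : Fin d → ℝ) : dotLM a x = dot a x := rfl

lemma continuous_dot (a : Fin d → ℝ) : Continuous (dot a) := by
  unfold dot
  exact continuous_finset_sum _ fun i _ => (continuous_const.mul (continuous_apply i))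

lemma dot_single (a : Fin d → ℝ) (j : Fin d) (c : ℝ) :
    dot a (Pi.single j c) = a j * c := by
  unfold dot
  rw [Finset.sum_eq_single j]
  · simp
  · intro i _ hij; simp [Pi.single_eq_of_ne hij]
  · simp

lemma dot_single' (a : Fin d → ℝ) (j : Fin d) (c : ℝ) :
    dot (Pi.single j c) a = c * a j := by
  rw [dot_comm, dot_single, mul_comm]

lemma dot_self_pos {a : Fin d → ℝ} (ha : a ≠ 0) : 0 < dot a a := by
  have h : ∃ i, a i ≠ 0 := by
    by_contra h; push_neg at h; exact ha (funext h)
  obtain ⟨i, hi⟩ := h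
  exact Finset.sum_pos' (fun j _ => mul_self_nonneg _) ⟨i, Finset.mem_univ i, mul_self_pos.mpr hi⟩

lemma abs_dot_le (a x : Fin d → ℝ) : |dot a x| ≤ (∑ i, |a i|) * ‖x‖ := by
  unfold dot
  calc |∑ i, a i * x i| ≤ ∑ i, |a i * x i| := Finset.abs_sum_le_sum_abs _ _
    _ ≤ ∑ i, |a i| * ‖x‖ := by
        refine Finset.sum_le_sum fun i _ => ?_
        rw [abs_mul]
        exact mul_le_mul_of_nonneg_left (by simpa using norm_le_pi_norm x i) (abs_nonneg _)
    _ = (∑ i, |a i|) * ‖x‖ := by rw [Finset.sum_mul]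

end Infra
section Part2

variable {d : ℕ}

lemma sign_sq {σ : Fin d → ℝ} (hσ : IsSignVec σ) (i : Fin d) : σ i * σ i = 1 := by
  rcases hσ i with h | h <;> rw [h] <;> norm_num

lemma sign_ne {σ : Fin d → ℝ} (hσ : IsSignVec σ) (i : Fin d) : σ i ≠ 0 := by
  rcases hσ i with h | h <;> rw [h] <;> norm_num

lemma sflip_sflip {σ : Fin d → ℝ} (hσ : IsSignVec σ) (x : Fin d → ℝ) :
    sflip σ (sflip σ x) = x := by
  funext i; simp only [sflip, ← mul_assoc, sign_sq hσ, one_mul]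

/-- Truncation lemma: replacing some coordinates of a point of `P` by `0`
stays in `P`, for locally anti-blocking `P`. -/
lemma trunc_mem {P : Set (Fin d → ℝ)}
    (hlab : ∀ σ : Fin d → ℝ, IsSignVec σ →
      IsAntiBlocking ((sflip σ '' P) ∩ nonnegOrthant d))
    {x y : Fin d → ℝ} (hx : x ∈ P) (hy : ∀ i, y i = x i ∨ y i = 0) : y ∈ P := by
  classical
  set τ : Fin d → ℝ := fun i => if 0 ≤ x i then 1 else -1 with hτdef
  have hτs : IsSignVec τ := fun i => by
    by_cases h : 0 ≤ x i <;> simp [τ, h]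
  have hτx : ∀ i, 0 ≤ τ i * x i := by
    intro i
    by_cases h : 0 ≤ x i
    · simp [τ, h]
    · simp only [τ, if_neg h]; push_neg at h; nlinarith
  obtain ⟨-, -, hdown⟩ := hlab τ hτs
  have hmem : sflip τ x ∈ (sflip τ '' P) ∩ nonnegOrthant d :=
    ⟨⟨x, hx, rfl⟩, fun i => hτx i⟩
  have hyy : sflip τ y ∈ (sflip τ '' P) ∩ nonnegOrthant d := by
    refine hdown _ hmem _ fun i => ?_
    rcases hy i with h | h
    · exact ⟨by simpa [sflip, h] using hτx i, by simp [sflip, h, le_refl]⟩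
    · exact ⟨by simp [sflip, h], by simpa [sflip, h] using hτx i⟩
  obtain ⟨p, hp, hpe⟩ := hyy.1
  have : p = y := by
    have := congrArg (sflip τ) hpe
    rwa [sflip_sflip hτs, sflip_sflip hτs] at this
  rwa [this] at hp

lemma isLinearMap_dot (a : Fin d → ℝ) : IsLinearMap ℝ (dot a) :=
  ⟨dot_add a, fun c x => by rw [dot_smul]; rfl⟩

lemma dot_le_on_hull {W : Set (Fin d → ℝ)} {a : Fin d → ℝ} {b : ℝ}
    (h : ∀ w ∈ W, dot a w ≤ b) :
    ∀ x ∈ convexHull ℝ W, dot a x ≤ b := fun _ hx =>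
  convexHull_min h (convex_halfSpace_le (isLinearMap_dot a) b) hx

lemma dot_eq_on_hull {W : Set (Fin d → ℝ)} {a : Fin d → ℝ} {b : ℝ}
    (h : ∀ w ∈ W, dot a w = b) :
    ∀ x ∈ convexHull ℝ W, dot a x = b := fun _ hx =>
  convexHull_min h (convex_hyperplane (isLinearMap_dot a) b) hx

/-- The touching set of a linear functional on a hull of a finite set is the
hull of the touching generators. -/
lemma touch_hull_eq {V : Finset (Fin d → ℝ)} {a : Fin d → ℝ} {b : ℝ}
    (hb : ∀ w ∈ V, dot a w ≤ b) :
    {x | x ∈ convexHull ℝ (V : Set (Fin d → ℝ)) ∧ dot a x = b}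
      = convexHull ℝ ((V.filter (fun w => dot a w = b)) : Set (Fin d → ℝ)) := by
  classical
  apply Set.Subset.antisymm
  · rintro x ⟨hxP, hxb⟩
    rw [Finset.convexHull_eq] at hxP
    obtain ⟨w, hw0, hw1, hwx⟩ := hxP
    have hxsum : x = ∑ y ∈ V, w y • y := by
      rw [← hwx, Finset.centerMass_eq_of_sum_1 _ _ hw1]; rfl
    have hdotx : dot a x = ∑ y ∈ V, w y * dot a y := by
      rw [hxsum]
      show (dotLM a) (∑ y ∈ V, w y • y) = _
      rw [map_sum (dotLM a) (fun y => w y • y) V]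
      exact Finset.sum_congr rfl fun y _ => by
        simp only [dotLM_apply]; rw [dot_smul]
    have hzero : ∑ y ∈ V, w y * (b - dot a y) = 0 := by
      rw [Finset.sum_congr rfl (fun y _ => mul_sub (w y) b (dot a y)),
        Finset.sum_sub_distrib, ← hdotx, ← Finset.sum_mul, hw1, hxb]
      ring
    have hterm : ∀ y ∈ V, w y * (b - dot a y) = 0 := by
      intro y hy
      have := (Finset.sum_eq_zero_iff_of_nonneg (fun y hy =>
        mul_nonneg (hw0 y hy) (sub_nonneg.mpr (hb y hy)))).mp hzero
      exact this y hy
    rw [Finset.convexHull_eq]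
    refine ⟨w, fun y hy => hw0 y (Finset.mem_filter.mp hy).1, ?_, ?_⟩
    · rw [← hw1]
      apply Finset.sum_subset (Finset.filter_subset _ _)
      intro y hy hyn
      rcases mul_eq_zero.mp (hterm y hy) with h | h
      · exact h
      · exact absurd (Finset.mem_filter.mpr ⟨hy, by linarith [sub_eq_zero.mp h]⟩) hyn
    · have hsum_eq : ∑ y ∈ V.filter (fun w => dot a w = b), w y = ∑ y ∈ V, w y := by
        apply Finset.sum_subset (Finset.filter_subset _ _)
        intro y hy hyn
        rcases mul_eq_zero.mp (hterm y hy) with h | h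
        · exact h
        · exact absurd (Finset.mem_filter.mpr ⟨hy, by linarith [sub_eq_zero.mp h]⟩) hyn
      have hsum1' : ∑ y ∈ V.filter (fun w => dot a w = b), w y = 1 := by rw [hsum_eq, hw1]
      rw [Finset.centerMass_eq_of_sum_1 _ id hsum1']
      have hvec : ∑ y ∈ V.filter (fun w => dot a w = b), w y • id y = ∑ y ∈ V, w y • id y := by
        apply Finset.sum_subset (Finset.filter_subset _ _)
        intro y hy hyn
        rcases mul_eq_zero.mp (hterm y hy) with h | h
        · simp [h]
        · exact absurd (Finset.mem_filter.mpr ⟨hy, by linarith [sub_eq_zero.mp h]⟩) hyn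
      simp only [id] at hvec ⊢
      rw [hvec, ← hxsum]
  · intro x hx
    constructor
    · exact convexHull_mono (Finset.coe_subset.mpr (Finset.filter_subset _ _)) hx
    · exact dot_eq_on_hull (W := ((V.filter (fun w => dot a w = b)) : Set (Fin d → ℝ)))
        (fun w hw => (Finset.mem_filter.mp hw).2) x hx

lemma vectorSpan_le_ker {S : Set (Fin d → ℝ)} {a : Fin d → ℝ} {b : ℝ}
    (h : ∀ x ∈ S, dot a x = b) : vectorSpan ℝ S ≤ LinearMap.ker (dotLM a) := by
  rw [vectorSpan_def, Submodule.span_le]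
  rintro u ⟨x, hx, y, hy, rfl⟩
  simp only [SetLike.mem_coe, LinearMap.mem_ker, dotLM_apply, vsub_eq_sub]
  rw [dot_sub, h x hx, h y hy, sub_self]

lemma finrank_ker_dot {a : Fin d → ℝ} (ha : a ≠ 0) :
    Module.finrank ℝ (LinearMap.ker (dotLM a)) = d - 1 := by
  have hsurj : Function.Surjective (dotLM a) := by
    intro c
    refine ⟨(c / dot a a) • a, ?_⟩
    simp only [dotLM_apply]
    rw [dot_smul, div_mul_cancel₀]
    exact ne_of_gt (dot_self_pos ha)
  have h1 : LinearMap.range (dotLM a) = ⊤ := LinearMap.range_eq_top.mpr hsurj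
  have := LinearMap.finrank_range_add_finrank_ker (dotLM a)
  rw [h1] at this
  have htop : Module.finrank ℝ (⊤ : Submodule ℝ ℝ) = 1 := by
    rw [finrank_top, Module.finrank_self]
  have hE : Module.finrank ℝ (Fin d → ℝ) = d := by
    rw [Module.finrank_pi, Fintype.card_fin]
  rw [htop, hE] at this
  omega

/-- Two functionals whose kernels contain a common `d-1`-dimensional subspace
are proportional. -/
lemma prop_of_ker {W : Submodule ℝ (Fin d → ℝ)} {a a' : Fin d → ℝ} (ha : a ≠ 0)
    (hW : Module.finrank ℝ W = d - 1)
    (hWa : W ≤ LinearMap.ker (dotLM a)) (hWa' : W ≤ LinearMap.ker (dotLM a')) :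
    ∃ c : ℝ, a' = c • a := by
  have hWeq : W = LinearMap.ker (dotLM a) := by
    apply Submodule.eq_of_le_of_finrank_le hWa
    rw [finrank_ker_dot ha, hW]
  have hker : LinearMap.ker (dotLM a) ≤ LinearMap.ker (dotLM a') := hWeq ▸ hWa'
  set u : Fin d → ℝ := (dot a a)⁻¹ • a with hu
  have hau : dot a u = 1 := by
    rw [hu, dot_smul, inv_mul_cancel₀ (ne_of_gt (dot_self_pos ha))]
  refine ⟨dot a' u, ?_⟩
  funext j
  have hker_mem : Pi.single j 1 - (dot a (Pi.single j 1)) • u ∈ LinearMap.ker (dotLM a) := by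
    simp only [LinearMap.mem_ker, dotLM_apply]
    rw [dot_sub, dot_smul, hau, mul_one, sub_self]
  have := hker hker_mem
  simp only [LinearMap.mem_ker, dotLM_apply] at this
  rw [dot_sub, dot_smul, sub_eq_zero] at this
  have h1 : dot a' (Pi.single j 1) = a' j := by rw [dot_single, mul_one]
  have h2 : dot a (Pi.single j 1) = a j := by rw [dot_single, mul_one]
  rw [h1, h2] at this
  simp only [Pi.smul_apply, smul_eq_mul]
  rw [this]; ring

end Part2
section Part3

variable {d : ℕ} {P : Set (Fin d → ℝ)} {V : Finset (Fin d → ℤ)}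

lemma interior_ball (h0 : 0 ∈ interior P) :
    ∃ ε > 0, ∀ x : Fin d → ℝ, ‖x‖ < ε → x ∈ P := by
  rw [mem_interior_iff_mem_nhds, Metric.mem_nhds_iff] at h0
  obtain ⟨ε, hε, hb⟩ := h0
  exact ⟨ε, hε, fun x hx => hb (by simpa [Metric.mem_ball, dist_zero_right] using hx)⟩

lemma gen_mem (hP : P = convexHull ℝ (intCast '' (V : Set (Fin d → ℤ))))
    {v : Fin d → ℤ} (hv : v ∈ V) : intCast v ∈ P := by
  rw [hP]; exact subset_convexHull ℝ _ ⟨v, hv, rfl⟩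

lemma P_compact (hP : P = convexHull ℝ (intCast '' (V : Set (Fin d → ℤ)))) :
    IsCompact P := by
  rw [hP]; exact ((V.finite_toSet).image intCast).isCompact_convexHull ℝ

lemma P_convex (hP : P = convexHull ℝ (intCast '' (V : Set (Fin d → ℤ)))) :
    Convex ℝ P := by rw [hP]; exact convex_convexHull ℝ _

lemma orthant_closed (σ : Fin d → ℝ) : IsClosed {x : Fin d → ℝ | ∀ i, 0 ≤ σ i * x i} := by
  have : {x : Fin d → ℝ | ∀ i, 0 ≤ σ i * x i} = ⋂ i, {x | 0 ≤ σ i * x i} := by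
    ext x; simp
  rw [this]
  exact isClosed_iInter fun i =>
    isClosed_le continuous_const (continuous_const.mul (continuous_apply i))

lemma orthant_convex (σ : Fin d → ℝ) : Convex ℝ {x : Fin d → ℝ | ∀ i, 0 ≤ σ i * x i} := by
  have : {x : Fin d → ℝ | ∀ i, 0 ≤ σ i * x i} = ⋂ i, {x | σ i * x i ≥ 0} := by
    ext x; simp
  rw [this]
  refine convex_iInter fun i => convex_halfSpace_ge ?_ 0
  exact ⟨fun x y => mul_add _ _ _, fun c x => by simp [mul_comm, mul_assoc, mul_left_comm]⟩

lemma norm_single_le (j : Fin d) (c : ℝ) : ‖(Pi.single j c : Fin d → ℝ)‖ ≤ |c| := by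
  refine (pi_norm_le_iff_of_nonneg (abs_nonneg c)).mpr fun i => ?_
  rcases eq_or_ne i j with rfl | h
  · simp [Pi.single_eq_same]
  · simp [Pi.single_eq_of_ne h]

lemma intCast_ne_zero_of_gcd {a : Fin d → ℤ} (h : Finset.univ.gcd a = 1) :
    intCast a ≠ 0 := by
  intro hz
  have : ∀ i ∈ Finset.univ, a i = 0 := fun i _ => by
    have := congrFun hz i
    rw [intCastVec_apply, Pi.zero_apply] at this
    exact_mod_cast this
  rw [Finset.gcd_eq_zero_iff.mpr this] at h
  norm_num at h

lemma gcd_unit_of_support {a : Fin d → ℤ} {j : Fin d} (hgcd : Finset.univ.gcd a = 1)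
    (hzero : ∀ i, i ≠ j → a i = 0) : a j = 1 ∨ a j = -1 := by
  have h1 : a j ∣ 1 := by
    rw [← hgcd]
    refine Finset.dvd_gcd fun i _ => ?_
    rcases eq_or_ne i j with rfl | h
    · exact dvd_rfl
    · rw [hzero i h]; exact dvd_zero _
  exact Int.isUnit_iff.mp (isUnit_of_dvd_one h1)

lemma touch_nonempty {Q : Set (Fin d → ℝ)} {a : Fin d → ℤ} {b : ℝ}
    (hfr : Module.finrank ℝ (vectorSpan ℝ {x | x ∈ Q ∧ dot (intCast a) x = b}) = d - 1)
    (hd2 : 2 ≤ d) : {x | x ∈ Q ∧ dot (intCast a) x = b}.Nonempty := by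
  rw [Set.nonempty_iff_ne_empty]
  intro he
  rw [he] at hfr
  rw [vectorSpan_empty, finrank_bot] at hfr
  omega

/-- KEY LEMMA (uses reflexivity): the `σ`-signed unit point in direction `j`
lies in `P`, and `σ j * x j ≤ 1` on `P`. -/
lemma coord_max_one
    (hP : P = convexHull ℝ (intCast '' (V : Set (Fin d → ℤ)))) (hVne : V.Nonempty)
    (h0 : 0 ∈ interior P)
    (hlab : ∀ σ : Fin d → ℝ, IsSignVec σ →
      IsAntiBlocking ((sflip σ '' P) ∩ nonnegOrthant d))
    (hrefl : ∃ A : Finset (Fin d → ℤ), P = {x | ∀ a ∈ A, dot (intCast a) x ≤ 1})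
    {σ : Fin d → ℝ} (hσ : IsSignVec σ) (j : Fin d) :
    (Pi.single j (σ j) : Fin d → ℝ) ∈ P ∧ ∀ x ∈ P, σ j * x j ≤ 1 := by
  classical
  set f : (Fin d → ℤ) → ℝ := fun v => σ j * ((v j : ℤ) : ℝ) with hf
  set m : ℝ := V.sup' hVne f with hm
  obtain ⟨vs, hvs, hvsm⟩ := Finset.exists_mem_eq_sup' hVne f
  -- validity : ∀ x ∈ P, σ j * x j ≤ m
  have hvalid : ∀ x ∈ P, σ j * x j ≤ m := by
    intro x hx
    have h1 : ∀ w ∈ intCast '' (V : Set (Fin d → ℤ)), dot (Pi.single j (σ j)) w ≤ m := by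
      rintro w ⟨v, hv, rfl⟩
      rw [dot_single']
      exact Finset.le_sup' f hv
    have := dot_le_on_hull h1 x (hP ▸ hx)
    rwa [dot_single'] at this
  -- m is positive
  obtain ⟨ε, hε, hball⟩ := interior_ball h0
  have hmpos : 0 < m := by
    have hx : (Pi.single j (σ j * (ε/2)) : Fin d → ℝ) ∈ P := by
      apply hball
      refine lt_of_le_of_lt (norm_single_le _ _) ?_
      have h2 : |σ j| = 1 := by rcases hσ j with h | h <;> rw [h] <;> norm_num
      rw [abs_mul, h2, one_mul, abs_of_pos (by linarith : (0:ℝ) < ε/2)]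
      linarith
    have := hvalid _ hx
    have h2 : σ j * (Pi.single j (σ j * (ε/2)) : Fin d → ℝ) j = ε/2 := by
      rw [Pi.single_eq_same, ← mul_assoc, sign_sq hσ, one_mul]
    rw [h2] at this
    linarith
  -- m = σ j * vs j is a positive integer
  have hmvs : m = σ j * ((vs j : ℤ) : ℝ) := hvsm
  set mz : ℤ := if σ j = 1 then vs j else -(vs j) with hmz
  have hmzm : m = ((mz : ℤ) : ℝ) := by
    rcases hσ j with h | h
    · rw [hmvs, h, one_mul, hmz, if_pos h]
    · rw [hmvs, h, hmz, if_neg (by rw [h]; norm_num)]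
      push_cast; ring
  have hm1 : (1:ℝ) ≤ m := by
    have : (0:ℤ) < mz := by
      have := hmpos; rw [hmzm] at this; exact_mod_cast this
    have : (1:ℤ) ≤ mz := this
    rw [hmzm]; exact_mod_cast this
  -- the truncated point w = single j (vs j) ∈ P
  have hw : (Pi.single j (((vs j : ℤ) : ℝ)) : Fin d → ℝ) ∈ P := by
    apply trunc_mem hlab (gen_mem hP hvs)
    intro i
    rcases eq_or_ne i j with rfl | h
    · left; rw [Pi.single_eq_same]; rfl
    · right; rw [Pi.single_eq_of_ne h]
  -- reflexivity: m ≤ 1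
  obtain ⟨A, hA⟩ := hrefl
  have hq : (Pi.single j (σ j * (m+1)) : Fin d → ℝ) ∉ P := by
    intro hq
    have := hvalid _ hq
    rw [Pi.single_eq_same, ← mul_assoc, sign_sq hσ, one_mul] at this
    linarith
  rw [hA] at hq
  simp only [Set.mem_setOf_eq, not_forall] at hq
  obtain ⟨a', ha'A, ha'⟩ := hq
  push_neg at ha'
  rw [dot_single] at ha'
  rw [intCastVec_apply] at ha'
  set t : ℝ := σ j * ((a' j : ℤ) : ℝ) with ht
  have ht1 : (1:ℝ) ≤ t := by
    have htm : t * (m+1) > 1 := by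
      rw [ht]; calc (1:ℝ) < (a' j : ℝ) * (σ j * (m+1)) := ha'
        _ = σ j * (a' j : ℝ) * (m+1) := by ring
    have htpos : 0 < t := by
      by_contra h
      push_neg at h
      nlinarith
    set tz : ℤ := if σ j = 1 then a' j else -(a' j) with htz
    have htzt : t = ((tz : ℤ) : ℝ) := by
      rcases hσ j with h | h
      · rw [ht, h, one_mul, htz, if_pos h]
      · rw [ht, h, htz, if_neg (by rw [h]; norm_num)]
        push_cast; ring
    have : (0:ℤ) < tz := by rw [htzt] at htpos; exact_mod_cast htpos
    have : (1:ℤ) ≤ tz := this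
    rw [htzt]; exact_mod_cast this
  have hwle : dot (intCast a') (Pi.single j (((vs j : ℤ) : ℝ))) ≤ 1 := by
    have := hw; rw [hA] at this; exact this a' ha'A
  rw [dot_single, intCastVec_apply] at hwle
  have haw : ((a' j : ℤ) : ℝ) * ((vs j : ℤ) : ℝ) = t * m := by
    rw [ht, hmvs,
      show σ j * ((a' j : ℤ):ℝ) * (σ j * ((vs j : ℤ):ℝ))
        = (σ j * σ j) * (((a' j : ℤ):ℝ) * ((vs j : ℤ):ℝ)) from by ring,
      sign_sq hσ, one_mul]
  rw [haw] at hwle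
  have hmle1 : m ≤ 1 := by nlinarith
  have hmeq : m = 1 := le_antisymm hmle1 hm1
  -- vs j as real equals σ j
  have hvsj : ((vs j : ℤ) : ℝ) = σ j := by
    have : σ j * (σ j * ((vs j : ℤ):ℝ)) = σ j * 1 := by rw [← hmvs, hmeq]
    rwa [← mul_assoc, sign_sq hσ, one_mul, mul_one] at this
  constructor
  · rw [← hvsj]; exact hw
  · intro x hx; rw [← hmeq]; exact hvalid x hx

/-- If a facet inequality of the orthant piece has touching set inside a
coordinate hyperplane, its normal is supported on that coordinate. -/
lemma facet_coord_support {Q : Set (Fin d → ℝ)} {a : Fin d → ℤ} {b : ℝ} {j : Fin d}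
    (hfr : Module.finrank ℝ (vectorSpan ℝ {x | x ∈ Q ∧ dot (intCast a) x = b}) = d - 1)
    (hd1 : 1 ≤ d)
    (hsub : ∀ x ∈ Q, dot (intCast a) x = b → x j = 0) :
    ∃ c : ℝ, intCast a = c • (Pi.single j 1 : Fin d → ℝ) := by
  set T := {x | x ∈ Q ∧ dot (intCast a) x = b} with hT
  have hsingle : (Pi.single j (1:ℝ) : Fin d → ℝ) ≠ 0 := by
    intro h
    have := congrFun h j
    rw [Pi.single_eq_same] at this
    norm_num at this
  have h1 : vectorSpan ℝ T ≤ LinearMap.ker (dotLM (Pi.single j (1:ℝ))) := by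
    apply vectorSpan_le_ker (b := 0)
    rintro x ⟨hxQ, hxb⟩
    rw [dot_single', one_mul]
    exact hsub x hxQ hxb
  have h2 : vectorSpan ℝ T ≤ LinearMap.ker (dotLM (intCast a)) := by
    apply vectorSpan_le_ker (b := b)
    rintro x ⟨hxQ, hxb⟩
    exact hxb
  exact prop_of_ker hsingle hfr h1 h2

/-- If `σ j * a j < 0` for a valid inequality on the orthant piece, every
touching point has vanishing `j`-th coordinate. -/
lemma touch_coord_zero
    (hlab : ∀ σ : Fin d → ℝ, IsSignVec σ →
      IsAntiBlocking ((sflip σ '' P) ∩ nonnegOrthant d))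
    {σ : Fin d → ℝ} (hσ : IsSignVec σ) {a : Fin d → ℤ} {b : ℝ} {j : Fin d}
    (hvalid : ∀ x ∈ P ∩ {x | ∀ i, 0 ≤ σ i * x i}, dot (intCast a) x ≤ b)
    (hneg : σ j * ((a j : ℤ) : ℝ) < 0) :
    ∀ x ∈ P ∩ {x | ∀ i, 0 ≤ σ i * x i}, dot (intCast a) x = b → x j = 0 := by
  rintro x ⟨hxP, hxO⟩ hxb
  by_contra hxj
  set y : Fin d → ℝ := x - Pi.single j (x j) with hy
  have hyP : y ∈ P := by
    apply trunc_mem hlab hxP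
    intro i
    rcases eq_or_ne i j with rfl | h
    · right; simp [hy, Pi.single_eq_same]
    · left; simp [hy, Pi.single_eq_of_ne h]
  have hyO : y ∈ {x | ∀ i, 0 ≤ σ i * x i} := by
    intro i
    rcases eq_or_ne i j with rfl | h
    · simp [hy, Pi.single_eq_same]
    · simp only [hy, Pi.sub_apply, Pi.single_eq_of_ne h, sub_zero]
      exact hxO i
  have hdy : dot (intCast a) y = b - ((a j : ℤ) : ℝ) * x j := by
    rw [hy, dot_sub, dot_single, hxb, intCastVec_apply]
  have hax : ((a j : ℤ) : ℝ) * x j < 0 := by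
    have h1 : 0 < σ j * x j := lt_of_le_of_ne (hxO j) (by
      intro h
      exact hxj (by
        have := h.symm
        rcases mul_eq_zero.mp this with h' | h'
        · exact absurd h' (sign_ne hσ j)
        · exact h'))
    have : ((a j : ℤ) : ℝ) * x j = (σ j * ((a j : ℤ) : ℝ)) * (σ j * x j) := by
      rw [show (σ j * ((a j : ℤ) : ℝ)) * (σ j * x j) = (σ j * σ j) * (((a j : ℤ) : ℝ) * x j) by ring,
        sign_sq hσ, one_mul]
    rw [this]
    exact mul_neg_of_neg_of_pos hneg h1
  have := hvalid y ⟨hyP, hyO⟩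
  rw [hdy] at this
  linarith

end Part3
section Part4a

variable {d : ℕ}

lemma sInf_eq_zero' {S : Set ℝ} (h0 : (0:ℝ) ∈ S) (hnn : ∀ y ∈ S, 0 ≤ y) :
    sInf S = 0 :=
  le_antisymm (csInf_le ⟨0, fun y hy => hnn y hy⟩ h0) (le_csInf ⟨0, h0⟩ hnn)

lemma sign_int_ge_one {σ : ℝ} (hσ : σ = 1 ∨ σ = -1) {z : ℤ}
    (h : 0 < σ * (z:ℝ)) : 1 ≤ σ * (z:ℝ) := by
  rcases hσ with h1 | h1 <;> subst h1
  · rw [one_mul] at h ⊢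
    exact_mod_cast (by exact_mod_cast h : (0:ℤ) < z)
  · have hz : (z:ℝ) < 0 := by nlinarith
    have : z < 0 := by exact_mod_cast hz
    have : z ≤ -1 := by omega
    have : (z:ℝ) ≤ -1 := by exact_mod_cast this
    nlinarith

lemma single_mem_orthant {σ : Fin d → ℝ} (hσ : IsSignVec σ) (j : Fin d) :
    (Pi.single j (σ j) : Fin d → ℝ) ∈ {x : Fin d → ℝ | ∀ i, 0 ≤ σ i * x i} := by
  intro i
  rcases eq_or_ne i j with rfl | h
  · rw [Pi.single_eq_same, sign_sq hσ]; norm_num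
  · rw [Pi.single_eq_of_ne h, mul_zero]

lemma finset_gcd_bezout {ι : Type*} [DecidableEq ι] (s : Finset ι) (f : ι → ℤ) :
    ∃ g : ι → ℤ, ∑ i ∈ s, g i * f i = s.gcd f := by
  classical
  induction s using Finset.induction_on with
  | empty => exact ⟨fun _ => 0, by simp⟩
  | insert a s hnotmem ih =>
    obtain ⟨g, hg⟩ := ih
    rw [Finset.gcd_insert]
    have hbez : (Int.gcd (f a) (s.gcd f) : ℤ)
        = f a * Int.gcdA (f a) (s.gcd f) + (s.gcd f) * Int.gcdB (f a) (s.gcd f) :=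
      Int.gcd_eq_gcd_ab _ _
    set A := Int.gcdA (f a) (s.gcd f)
    set B := Int.gcdB (f a) (s.gcd f)
    refine ⟨fun i => if i = a then A else B * g i, ?_⟩
    rw [Finset.sum_insert hnotmem]
    have hifa : (fun i => if i = a then A else B * g i) a = A := by simp
    rw [hifa]
    have hsum : ∑ i ∈ s, (fun i => if i = a then A else B * g i) i * f i
        = B * ∑ i ∈ s, g i * f i := by
      simp only
      rw [Finset.mul_sum]
      refine Finset.sum_congr rfl fun i hi => ?_
      rw [if_neg (by rintro rfl; exact hnotmem hi)]
      ring
    rw [hsum, hg]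
    have : GCDMonoid.gcd (f a) (s.gcd f) = (Int.gcd (f a) (s.gcd f) : ℤ) :=
      (Int.coe_gcd _ _).symm
    rw [this, hbez]
    ring

/-- Push past a relative interior point. -/
lemma push_past {T : Set (Fin d → ℝ)} {z₀ y : Fin d → ℝ}
    (hz : z₀ ∈ intrinsicInterior ℝ T) (hy : y ∈ T) :
    ∃ t : ℝ, 0 < t ∧ z₀ + t • (z₀ - y) ∈ T := by
  have hz₀T : z₀ ∈ T := intrinsicInterior_subset hz
  have hz₀s : z₀ ∈ affineSpan ℝ T := subset_affineSpan ℝ T hz₀T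
  have hys : y ∈ affineSpan ℝ T := subset_affineSpan ℝ T hy
  have hpath : ∀ t : ℝ, z₀ + t • (z₀ - y) ∈ affineSpan ℝ T := by
    intro t
    have := AffineSubspace.smul_vsub_vadd_mem (affineSpan ℝ T) t hz₀s hys hz₀s
    simpa [vsub_eq_sub, vadd_eq_add, add_comm] using this
  rw [mem_intrinsicInterior] at hz
  obtain ⟨w, hw, hwz⟩ := hz
  set γ : ℝ → (affineSpan ℝ T : Set (Fin d → ℝ)) :=
    fun t => ⟨z₀ + t • (z₀ - y), hpath t⟩ with hγ
  have hγcont : Continuous γ := by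
    refine Continuous.subtype_mk ?_ _
    exact continuous_const.add (continuous_id.smul continuous_const)
  have hγ0 : γ 0 = w := by
    apply Subtype.ext
    rw [hγ]
    simp only [zero_smul, add_zero]
    exact hwz.symm
  have hopen : IsOpen (γ ⁻¹' (interior ((Subtype.val : (affineSpan ℝ T : Set (Fin d → ℝ)) → _) ⁻¹' T))) :=
    isOpen_interior.preimage hγcont
  have h0mem : (0:ℝ) ∈ γ ⁻¹' (interior (Subtype.val ⁻¹' T)) := by
    rw [Set.mem_preimage, hγ0]; exact hw
  obtain ⟨ε, hε, hball⟩ := Metric.isOpen_iff.mp hopen 0 h0mem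
  refine ⟨ε/2, by linarith, ?_⟩
  have : γ (ε/2) ∈ interior (Subtype.val ⁻¹' T) := by
    apply hball
    rw [Metric.mem_ball, Real.dist_eq, sub_zero, abs_of_pos (by linarith)]
    linarith
  have := interior_subset this
  exact this

end Part4a
section Part4b

variable {d : ℕ} {P : Set (Fin d → ℝ)}

lemma dot_smul_left (c : ℝ) (x y : Fin d → ℝ) : dot (c • x) y = c * dot x y := by
  rw [dot_comm, dot_smul, dot_comm]

lemma exists_tight {A : Finset (Fin d → ℤ)}
    (hA : P = {x | ∀ a ∈ A, dot (intCast a) x ≤ 1})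
    {σ : Fin d → ℝ} {a : Fin d → ℤ} {b : ℝ}
    (hvalid : ∀ x ∈ P ∩ {x | ∀ i, 0 ≤ σ i * x i}, dot (intCast a) x ≤ b)
    (hann : ∀ i, 0 ≤ σ i * ((a i : ℤ) : ℝ)) (hane : intCast a ≠ 0)
    {p : Fin d → ℝ} (hpQ : p ∈ P ∩ {x | ∀ i, 0 ≤ σ i * x i})
    (hpb : dot (intCast a) p = b) (hppos : ∀ i, 0 < σ i * p i) :
    ∃ a' ∈ A, dot (intCast a') p = 1 := by
  by_contra hno
  push_neg at hno
  have hstrict : ∀ a' ∈ A, dot (intCast a') p < 1 := by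
    intro a' ha'
    have hle : dot (intCast a') p ≤ 1 := by
      have := hpQ.1; rw [hA] at this; exact this a' ha'
    exact lt_of_le_of_ne hle (hno a' ha')
  have hU : p ∈ interior P := by
    have hUopen : IsOpen {x : Fin d → ℝ | ∀ a' ∈ A, dot (intCast a') x < 1} := by
      have heq : {x : Fin d → ℝ | ∀ a' ∈ A, dot (intCast a') x < 1}
          = ⋂ a' ∈ A, {x | dot (intCast a') x < 1} := by ext x; simp
      rw [heq]
      exact isOpen_biInter_finset fun a' _ =>
        isOpen_lt (continuous_dot _) continuous_const
    have hsub : {x : Fin d → ℝ | ∀ a' ∈ A, dot (intCast a') x < 1} ⊆ P := by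
      intro x hx; rw [hA]; exact fun a' ha' => le_of_lt (hx a' ha')
    exact interior_maximal hsub hUopen hstrict
  rw [mem_interior_iff_mem_nhds, Metric.mem_nhds_iff] at hU
  obtain ⟨δ, hδ, hball⟩ := hU
  set κ : ℝ := δ / (2 * (‖intCast a‖ + 1)) with hκ
  have hnorm : (0:ℝ) ≤ ‖intCast a‖ := norm_nonneg _
  have hκpos : 0 < κ := by
    rw [hκ]; positivity
  set q : Fin d → ℝ := p + κ • intCast a with hq
  have hqP : q ∈ P := by
    apply hball
    rw [Metric.mem_ball, dist_eq_norm]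
    have hqp : q - p = κ • intCast a := by rw [hq]; abel
    rw [hqp, norm_smul, Real.norm_eq_abs, abs_of_pos hκpos]
    rw [hκ]
    rw [div_mul_eq_mul_div, div_lt_iff₀ (by positivity)]
    nlinarith
  have hqO : ∀ i, 0 ≤ σ i * q i := by
    intro i
    have hqi : σ i * q i = σ i * p i + κ * (σ i * ((a i : ℤ) : ℝ)) := by
      rw [hq]; simp only [Pi.add_apply, Pi.smul_apply, smul_eq_mul, intCastVec_apply]; ring
    rw [hqi]
    exact add_nonneg (hppos i).le (mul_nonneg hκpos.le (hann i))
  have hqv : dot (intCast a) q ≤ b := hvalid q ⟨hqP, hqO⟩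
  have hqd : dot (intCast a) q = b + κ * dot (intCast a) (intCast a) := by
    rw [hq, dot_add, hpb, dot_smul]
  nlinarith [dot_self_pos hane, hκpos]

lemma touch_proportional {A : Finset (Fin d → ℤ)} (hd1 : 1 ≤ d)
    (hA : P = {x | ∀ a ∈ A, dot (intCast a) x ≤ 1})
    {σ : Fin d → ℝ} (hσ : IsSignVec σ)
    (hQconv : Convex ℝ (P ∩ {x | ∀ i, 0 ≤ σ i * x i}))
    {a : Fin d → ℤ} {b : ℝ}
    (hvalid : ∀ x ∈ P ∩ {x | ∀ i, 0 ≤ σ i * x i}, dot (intCast a) x ≤ b)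
    (hfr : Module.finrank ℝ (vectorSpan ℝ
      {x | x ∈ P ∩ {x | ∀ i, 0 ≤ σ i * x i} ∧ dot (intCast a) x = b}) = d - 1)
    (hgcd : Finset.univ.gcd a = 1)
    (hann : ∀ i, 0 ≤ σ i * ((a i : ℤ) : ℝ))
    (hall : ∀ j, ∃ x, x ∈ P ∩ {x | ∀ i, 0 ≤ σ i * x i} ∧
      dot (intCast a) x = b ∧ x j ≠ 0) :
    ∀ x ∈ P ∩ {x | ∀ i, 0 ≤ σ i * x i}, dot (intCast a) x ≤ 1 := by
  classical
  haveI : Nonempty (Fin d) := ⟨⟨0, hd1⟩⟩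
  set Q : Set (Fin d → ℝ) := P ∩ {x | ∀ i, 0 ≤ σ i * x i} with hQ
  set T : Set (Fin d → ℝ) := {x | x ∈ Q ∧ dot (intCast a) x = b} with hT
  have hane : intCast a ≠ 0 := intCast_ne_zero_of_gcd hgcd
  have hTconv : Convex ℝ T := by
    have : T = Q ∩ {x | (fun y => dot (intCast a) y) x = b} := rfl
    rw [this]
    exact hQconv.inter (convex_hyperplane (isLinearMap_dot (intCast a)) b)
  -- the strictly positive average point u
  choose xs hxsQ hxsb hxsne using hall
  have hdpos : (0:ℝ) < (d:ℝ) := by exact_mod_cast hd1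
  set u : Fin d → ℝ := ∑ j : Fin d, (1/(d:ℝ)) • xs j with hu
  have huT : u ∈ T := by
    refine hTconv.sum_mem (fun j _ => by positivity) ?_ (fun j _ => ⟨hxsQ j, hxsb j⟩)
    rw [Finset.sum_const, Finset.card_univ, Fintype.card_fin, nsmul_eq_mul]
    field_simp
  have hupos : ∀ i, 0 < σ i * u i := by
    intro i
    have hui : u i = ∑ j : Fin d, (1/(d:ℝ)) * xs j i := by
      rw [hu, Finset.sum_apply]
      exact Finset.sum_congr rfl fun j _ => rfl
    rw [hui, Finset.mul_sum]
    refine Finset.sum_pos' (fun j _ => ?_) ⟨i, Finset.mem_univ i, ?_⟩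
    · have := (hxsQ j).2 i
      have h1d : (0:ℝ) ≤ 1/(d:ℝ) := by positivity
      calc (0:ℝ) ≤ (1/(d:ℝ)) * (σ i * xs j i) := mul_nonneg h1d this
        _ = σ i * (1/(d:ℝ) * xs j i) := by ring
    · have hpos : 0 < σ i * xs i i := by
        refine lt_of_le_of_ne ((hxsQ i).2 i) (Ne.symm ?_)
        exact mul_ne_zero (sign_ne hσ i) (hxsne i)
      calc (0:ℝ) < (1/(d:ℝ)) * (σ i * xs i i) := by positivity
        _ = σ i * (1/(d:ℝ) * xs i i) := by ring
  -- relative interior point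
  obtain ⟨z₀, hz₀⟩ := Set.Nonempty.intrinsicInterior hTconv ⟨u, huT⟩
  have hz₀T : z₀ ∈ T := intrinsicInterior_subset hz₀
  -- the segment points
  set t : ℕ → ℝ := fun n => 1/((n:ℝ)+2) with htdef
  have ht01 : ∀ n, 0 < t n ∧ t n < 1 := by
    intro n
    constructor
    · rw [htdef]; positivity
    · rw [htdef, div_lt_one (by positivity)]
      have : (0:ℝ) ≤ (n:ℝ) := Nat.cast_nonneg n
      linarith
  set pth : ℕ → (Fin d → ℝ) := fun n => (1 - t n) • z₀ + (t n) • u with hpth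
  have hpthT : ∀ n, pth n ∈ T := fun n =>
    hTconv hz₀T huT (by linarith [(ht01 n).2]) (le_of_lt (ht01 n).1) (by ring)
  have hpthpos : ∀ n, ∀ i, 0 < σ i * (pth n) i := by
    intro n i
    have : σ i * (pth n) i = (1 - t n) * (σ i * z₀ i) + t n * (σ i * u i) := by
      rw [hpth]; simp only [Pi.add_apply, Pi.smul_apply, smul_eq_mul]; ring
    rw [this]
    have h1 : 0 ≤ (1 - t n) * (σ i * z₀ i) :=
      mul_nonneg (by linarith [(ht01 n).2]) ((hz₀T.1).2 i)
    have h2 : 0 < t n * (σ i * u i) := mul_pos (ht01 n).1 (hupos i)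
    linarith
  -- tight constraints along the segment
  have htight : ∀ n, ∃ a' ∈ A, dot (intCast a') (pth n) = 1 := fun n =>
    exists_tight hA hvalid hann hane (hpthT n).1 (hpthT n).2 (hpthpos n)
  choose a' ha'A ha'tight using htight
  -- pigeonhole
  obtain ⟨n₁, n₂, hne12, heq12⟩ :=
    Finite.exists_ne_map_eq_of_infinite (fun n => (⟨a' n, ha'A n⟩ : {x // x ∈ A}))
  have haeq : a' n₁ = a' n₂ := congrArg Subtype.val heq12
  set c' : Fin d → ℤ := a' n₁ with hc'
  have htne : t n₁ ≠ t n₂ := by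
    intro h
    rw [htdef] at h
    field_simp at h
    exact hne12 (by exact_mod_cast (by linarith : ((n₁:ℕ):ℝ) = n₂))
  have hdotpth : ∀ n, dot (intCast (a' n)) (pth n)
      = (1 - t n) * dot (intCast (a' n)) z₀ + t n * dot (intCast (a' n)) u := by
    intro n
    rw [hpth, dot_add, dot_smul, dot_smul]
  have hz1 : dot (intCast c') z₀ = 1 ∧ dot (intCast c') u = 1 := by
    have e1 : (1 - t n₁) * dot (intCast c') z₀ + t n₁ * dot (intCast c') u = 1 := by
      rw [← hdotpth n₁]; exact ha'tight n₁
    have e2 : (1 - t n₂) * dot (intCast c') z₀ + t n₂ * dot (intCast c') u = 1 := by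
      have := ha'tight n₂
      rw [hdotpth n₂, ← haeq] at this
      exact this
    have hsub : (t n₁ - t n₂) * (dot (intCast c') u - dot (intCast c') z₀) = 0 := by
      nlinarith
    have h3 : dot (intCast c') u = dot (intCast c') z₀ := by
      rcases mul_eq_zero.mp hsub with h | h
      · exact absurd (by linarith : t n₁ = t n₂) htne
      · linarith
    have hC : dot (intCast c') z₀ = 1 := by
      have hr : (1 - t n₁) * dot (intCast c') z₀ + t n₁ * dot (intCast c') u
          = dot (intCast c') z₀ := by rw [h3]; ring
      linarith [e1, hr]
    exact ⟨hC, by rw [h3]; exact hC⟩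
  -- every point of T is tight for c'
  have hTtight : ∀ y ∈ T, dot (intCast c') y = 1 := by
    intro y hy
    obtain ⟨s, hs, hw⟩ := push_past hz₀ hy
    have hwP : z₀ + s • (z₀ - y) ∈ P := hw.1.1
    have hwle : dot (intCast c') (z₀ + s • (z₀ - y)) ≤ 1 := by
      rw [hA] at hwP; exact hwP c' (ha'A n₁)
    rw [dot_add, dot_smul, dot_sub, hz1.1] at hwle
    have hyle : dot (intCast c') y ≤ 1 := by
      have := hy.1.1; rw [hA] at this; exact this c' (ha'A n₁)
    nlinarith
  -- proportionality
  have hker1 : vectorSpan ℝ T ≤ LinearMap.ker (dotLM (intCast c')) :=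
    vectorSpan_le_ker (b := 1) hTtight
  have hker2 : vectorSpan ℝ T ≤ LinearMap.ker (dotLM (intCast a)) :=
    vectorSpan_le_ker (b := b) (fun x hx => hx.2)
  obtain ⟨c, hc⟩ := prop_of_ker hane hfr hker2 hker1
  -- c is a positive integer
  obtain ⟨g, hg⟩ := finset_gcd_bezout Finset.univ a
  rw [hgcd] at hg
  set cz : ℤ := ∑ i, g i * (c' i) with hcz
  have hczc : ((cz : ℤ) : ℝ) = c := by
    have hcomp : ∀ i, ((c' i : ℤ) : ℝ) = c * ((a i : ℤ) : ℝ) := by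
      intro i
      have := congrFun hc i
      simpa [intCastVec_apply] using this
    have h1 : ((cz : ℤ) : ℝ) = ∑ i, ((g i:ℤ):ℝ) * ((c' i:ℤ):ℝ) := by
      rw [hcz]; push_cast; rfl
    have h2 : ((1:ℤ):ℝ) = ∑ i, ((g i:ℤ):ℝ) * ((a i:ℤ):ℝ) := by
      rw [← hg]; push_cast; rfl
    rw [h1]
    calc ∑ i, ((g i:ℤ):ℝ) * ((c' i:ℤ):ℝ)
        = ∑ i, c * (((g i:ℤ):ℝ) * ((a i:ℤ):ℝ)) := by
          refine Finset.sum_congr rfl fun i _ => ?_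
          rw [hcomp i]; ring
      _ = c * ∑ i, ((g i:ℤ):ℝ) * ((a i:ℤ):ℝ) := by rw [Finset.mul_sum]
      _ = c * ((1:ℤ):ℝ) := by rw [← h2]
      _ = c := by norm_num
  have hdotau : 0 < dot (intCast a) u := by
    have hj : ∃ j, a j ≠ 0 := by
      by_contra hno
      push_neg at hno
      apply hane
      funext i; rw [intCastVec_apply, hno i]; norm_num
    obtain ⟨j₀, hj₀⟩ := hj
    unfold dot
    have hterm : ∀ i, ((intCast a) i) * u i = (σ i * ((a i:ℤ):ℝ)) * (σ i * u i) := by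
      intro i
      rw [intCastVec_apply,
        show (σ i * ((a i:ℤ):ℝ)) * (σ i * u i) = (σ i * σ i) * (((a i:ℤ):ℝ) * u i) from by ring,
        sign_sq hσ, one_mul]
    rw [Finset.sum_congr rfl (fun i _ => hterm i)]
    refine Finset.sum_pos' (fun i _ => mul_nonneg (hann i) (hupos i).le)
      ⟨j₀, Finset.mem_univ j₀, ?_⟩
    refine mul_pos (lt_of_le_of_ne (hann j₀) (Ne.symm ?_)) (hupos j₀)
    refine mul_ne_zero (sign_ne hσ j₀) ?_
    exact_mod_cast hj₀
  have hcu : dot (intCast c') u = c * dot (intCast a) u := by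
    rw [hc, dot_smul_left]
  have hcpos : 0 < c := by
    have h1 : dot (intCast c') u = 1 := hz1.2
    rw [hcu] at h1
    nlinarith
  have hcge1 : 1 ≤ c := by
    have : 0 < cz := by rw [← hczc] at hcpos; exact_mod_cast hcpos
    have : 1 ≤ cz := this
    rw [← hczc]; exact_mod_cast this
  -- conclusion
  intro x hx
  have hxle : dot (intCast c') x ≤ 1 := by
    have := hx.1; rw [hA] at this; exact this c' (ha'A n₁)
  have hxc : dot (intCast c') x = c * dot (intCast a) x := by
    rw [hc, dot_smul_left]
  nlinarith
end Part4b
section Part4c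

variable {d : ℕ} {P : Set (Fin d → ℝ)} {V : Finset (Fin d → ℤ)}

lemma forward_width
    (hP : P = convexHull ℝ (intCast '' (V : Set (Fin d → ℤ)))) (hVne : V.Nonempty)
    (h0 : 0 ∈ interior P)
    (hlab : ∀ σ : Fin d → ℝ, IsSignVec σ →
      IsAntiBlocking ((sflip σ '' P) ∩ nonnegOrthant d))
    (hrefl : ∃ A : Finset (Fin d → ℤ), P = {x | ∀ a ∈ A, dot (intCast a) x ≤ 1})
    {σ : Fin d → ℝ} (hσ : IsSignVec σ) :
    HasFacetWidthOne (P ∩ {x | ∀ i, 0 ≤ σ i * x i}) := by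
  intro a b hgcd hfacet
  obtain ⟨hvalid, hfr⟩ := hfacet
  have hd1 : 1 ≤ d := by
    by_contra h
    push_neg at h
    have hd0 : d = 0 := Nat.lt_one_iff.mp h
    subst hd0
    rw [Finset.univ_eq_empty, Finset.gcd_empty] at hgcd
    norm_num at hgcd
  set Q : Set (Fin d → ℝ) := P ∩ {x | ∀ i, 0 ≤ σ i * x i} with hQdef
  have hQcomp : IsCompact Q := (P_compact hP).inter_right (orthant_closed σ)
  have hQconv : Convex ℝ Q := (P_convex hP).inter (orthant_convex σ)
  have h0Q : (0 : Fin d → ℝ) ∈ Q :=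
    ⟨interior_subset h0, fun i => by simp⟩
  set S : Set ℝ := (fun x => dot (intCast a) x) '' Q with hSdef
  have hSne : S.Nonempty := ⟨dot (intCast a) 0, 0, h0Q, rfl⟩
  have hScomp : IsCompact S := hQcomp.image (continuous_dot (intCast a))
  have hSbddA : BddAbove S := hScomp.bddAbove
  have hSbddB : BddBelow S := hScomp.bddBelow
  have hsingle : ∀ j, (Pi.single j (σ j) : Fin d → ℝ) ∈ Q := fun j =>
    ⟨(coord_max_one hP hVne h0 hlab hrefl hσ j).1, single_mem_orthant hσ j⟩
  have hcoordle : ∀ (j : Fin d), ∀ x ∈ P, σ j * x j ≤ 1 := fun j =>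
    (coord_max_one hP hVne h0 hlab hrefl hσ j).2
  by_cases hneg : ∃ j, σ j * ((a j : ℤ) : ℝ) < 0
  · -- lower coordinate facet
    obtain ⟨j, hj⟩ := hneg
    have htz := touch_coord_zero hlab hσ hvalid hj
    obtain ⟨c, hc⟩ := facet_coord_support hfr hd1 htz
    have hzero : ∀ i, i ≠ j → a i = 0 := by
      intro i hij
      have h1 := congrFun hc i
      rw [intCastVec_apply, Pi.smul_apply, Pi.single_eq_of_ne hij] at h1
      simp only [smul_eq_mul, mul_zero] at h1
      exact_mod_cast h1
    have haj : a j = 1 ∨ a j = -1 := gcd_unit_of_support hgcd hzero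
    have hajr : ((a j : ℤ) : ℝ) = - σ j := by
      rcases haj with h | h <;> rcases hσ j with h' | h'
      · exfalso; rw [h, h'] at hj; norm_num at hj
      · rw [h, h']; norm_num
      · rw [h, h']; norm_num
      · exfalso; rw [h, h'] at hj; norm_num at hj
    have hdotx : ∀ x : Fin d → ℝ, dot (intCast a) x = - (σ j * x j) := by
      intro x
      unfold dot
      rw [Finset.sum_eq_single j]
      · rw [intCastVec_apply, hajr]; ring
      · intro i _ hij; rw [intCastVec_apply, hzero i hij]; norm_num
      · intro h; exact absurd (Finset.mem_univ j) h
    have hub : ∀ y ∈ S, y ≤ 0 := by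
      rintro y ⟨x, hx, rfl⟩
      show dot (intCast a) x ≤ 0
      rw [hdotx]
      have := hx.2 j
      linarith
    have h0S : (0:ℝ) ∈ S := ⟨0, h0Q, by show dot (intCast a) 0 = 0; rw [hdotx]; simp⟩
    have hsup : sSup S = 0 := le_antisymm (csSup_le hSne hub) (le_csSup hSbddA h0S)
    have hm1S : (-1:ℝ) ∈ S := by
      refine ⟨Pi.single j (σ j), hsingle j, ?_⟩
      show dot (intCast a) _ = -1
      rw [hdotx, Pi.single_eq_same, sign_sq hσ]
    have hlb : ∀ y ∈ S, -1 ≤ y := by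
      rintro y ⟨x, hx, rfl⟩
      show -1 ≤ dot (intCast a) x
      rw [hdotx]
      have := hcoordle j x hx.1
      linarith
    have hinf : sInf S = -1 := le_antisymm (csInf_le hSbddB hm1S) (le_csInf hSne hlb)
    rw [hsup, hinf]
    norm_num
  · push_neg at hneg
    have hane : intCast a ≠ 0 := intCast_ne_zero_of_gcd hgcd
    obtain ⟨j₀, hj₀⟩ : ∃ j, a j ≠ 0 := by
      by_contra h
      push_neg at h
      exact hane (funext fun i => by rw [intCastVec_apply, h i]; norm_num)
    have hvnn : ∀ y ∈ S, 0 ≤ y := by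
      rintro y ⟨x, hx, rfl⟩
      show 0 ≤ dot (intCast a) x
      unfold dot
      have hterm : ∀ i, (intCast a) i * x i = (σ i * ((a i:ℤ):ℝ)) * (σ i * x i) := fun i => by
        rw [intCastVec_apply,
          show (σ i * ((a i:ℤ):ℝ)) * (σ i * x i) = (σ i * σ i) * (((a i:ℤ):ℝ) * x i) from by ring,
          sign_sq hσ, one_mul]
      rw [Finset.sum_congr rfl fun i _ => hterm i]
      exact Finset.sum_nonneg fun i _ => mul_nonneg (hneg i) (hx.2 i)
    have h0S : (0:ℝ) ∈ S := ⟨0, h0Q, by show dot (intCast a) 0 = 0; exact dot_zero _⟩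
    have hinf : sInf S = 0 := sInf_eq_zero' h0S hvnn
    have hw : dot (intCast a) (Pi.single j₀ (σ j₀)) = σ j₀ * ((a j₀:ℤ):ℝ) := by
      rw [dot_single, intCastVec_apply]; ring
    have hge1' : 1 ≤ σ j₀ * ((a j₀:ℤ):ℝ) :=
      sign_int_ge_one (hσ j₀) (lt_of_le_of_ne (hneg j₀)
        (Ne.symm (mul_ne_zero (sign_ne hσ j₀) (by exact_mod_cast hj₀))))
    have hsup_ge : 1 ≤ sSup S :=
      le_csSup_of_le hSbddA ⟨_, hsingle j₀, rfl⟩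
        (by show (1:ℝ) ≤ dot (intCast a) (Pi.single j₀ (σ j₀)); rw [hw]; exact hge1')
    have hsup_le : ∀ x ∈ Q, dot (intCast a) x ≤ 1 := by
      by_cases hcoord : ∃ j, ∀ x ∈ Q, dot (intCast a) x = b → x j = 0
      · obtain ⟨j, hjz⟩ := hcoord
        obtain ⟨c, hc⟩ := facet_coord_support hfr hd1 hjz
        have hzero : ∀ i, i ≠ j → a i = 0 := by
          intro i hij
          have h1 := congrFun hc i
          rw [intCastVec_apply, Pi.smul_apply, Pi.single_eq_of_ne hij] at h1
          simp only [smul_eq_mul, mul_zero] at h1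
          exact_mod_cast h1
        have haj : a j = 1 ∨ a j = -1 := gcd_unit_of_support hgcd hzero
        have hajr : ((a j : ℤ) : ℝ) = σ j := by
          rcases haj with h | h <;> rcases hσ j with h' | h'
          · rw [h, h']; norm_num
          · exfalso; have := hneg j; rw [h, h'] at this; norm_num at this
          · exfalso; have := hneg j; rw [h, h'] at this; norm_num at this
          · rw [h, h']; norm_num
        have hdotx : ∀ x : Fin d → ℝ, dot (intCast a) x = σ j * x j := by
          intro x
          unfold dot
          rw [Finset.sum_eq_single j]
          · rw [intCastVec_apply, hajr]
          · intro i _ hij; rw [intCastVec_apply, hzero i hij]; norm_num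
          · intro h; exact absurd (Finset.mem_univ j) h
        intro x hx
        rw [hdotx]
        exact hcoordle j x hx.1
      · push_neg at hcoord
        obtain ⟨A, hA⟩ := hrefl
        exact touch_proportional hd1 hA hσ hQconv hvalid hfr hgcd hneg hcoord
    have hsup1 : sSup S = 1 := le_antisymm
      (csSup_le hSne (by rintro y ⟨x, hx, rfl⟩; exact hsup_le x hx)) hsup_ge
    rw [hsup1, hinf]
    norm_num

end Part4c
section Part5

variable {d : ℕ}

/-- Solution set of a finite system of integer-normal inequalities. -/
def isol (F : Finset ((Fin d → ℤ) × ℝ)) : Set (Fin d → ℝ) :=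
  {x | ∀ p ∈ F, dot (intCast p.1) x ≤ p.2}

lemma isol_antitone {F G : Finset ((Fin d → ℤ) × ℝ)} (h : F ⊆ G) :
    isol G ⊆ isol F := fun x hx p hp => hx p (h hp)

/-- Prune a system to an irredundant subsystem with the same solution set. -/
lemma prune_system (F : Finset ((Fin d → ℤ) × ℝ)) :
    ∃ M ⊆ F, isol M = isol F ∧
      ∀ p ∈ M, ∃ z, (∀ q ∈ M.erase p, dot (intCast q.1) z ≤ q.2) ∧
        p.2 < dot (intCast p.1) z := by
  classical
  induction F using Finset.strongInductionOn with
  | _ F ih =>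
    by_cases h : ∃ p ∈ F, isol (F.erase p) = isol F
    · obtain ⟨p, hp, hpe⟩ := h
      obtain ⟨M, hM1, hM2, hM3⟩ := ih (F.erase p) (Finset.erase_ssubset hp)
      exact ⟨M, hM1.trans (F.erase_subset p), hM2.trans hpe, hM3⟩
    · push_neg at h
      refine ⟨F, subset_rfl, rfl, ?_⟩
      intro p hp
      have hne := h p hp
      have hsub : isol F ⊆ isol (F.erase p) := isol_antitone (F.erase_subset p)
      have hns : ¬ isol (F.erase p) ⊆ isol F := fun hc =>
        hne (Set.Subset.antisymm hc hsub)
      rw [Set.not_subset] at hns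
      obtain ⟨z, hz1, hz2⟩ := hns
      refine ⟨z, fun q hq => hz1 q hq, ?_⟩
      simp only [isol, Set.mem_setOf_eq, not_forall] at hz2
      obtain ⟨q, hqF, hqv⟩ := hz2
      push_neg at hqv
      have hqp : q = p := by
        by_contra hqp
        exact absurd (hz1 q (Finset.mem_erase.mpr ⟨hqp, hqF⟩)) (not_le.mpr hqv)
      rwa [hqp] at hqv

/-- An irredundant inequality of a finite system with a strictly feasible
point is facet-defining. -/
lemma irredundant_facet {F : Finset ((Fin d → ℤ) × ℝ)} {p : (Fin d → ℤ) × ℝ}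
    (hp : p ∈ F) (hprim : intCast p.1 ≠ 0)
    {x₀ : Fin d → ℝ} (hx₀ : ∀ q ∈ F, dot (intCast q.1) x₀ < q.2)
    {z : Fin d → ℝ} (hz : ∀ q ∈ F.erase p, dot (intCast q.1) z ≤ q.2)
    (hzv : p.2 < dot (intCast p.1) z) :
    IsFacetIneq (isol F) p.1 p.2 := by
  classical
  constructor
  · exact fun x hx => hx p hp
  -- construct the point y with p tight and all other constraints strict
  have hx₀p : dot (intCast p.1) x₀ < p.2 := hx₀ p hp
  set D : ℝ := dot (intCast p.1) z - dot (intCast p.1) x₀ with hD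
  have hDpos : 0 < D := by rw [hD]; linarith
  set t : ℝ := (p.2 - dot (intCast p.1) x₀) / D with ht
  have ht0 : 0 < t := by rw [ht]; exact div_pos (by linarith) hDpos
  have ht1 : t < 1 := by
    rw [ht, div_lt_one hDpos, hD]; linarith
  set y : Fin d → ℝ := (1 - t) • x₀ + t • z with hy
  have hdoty : ∀ w : Fin d → ℝ,
      dot w y = (1 - t) * dot w x₀ + t * dot w z := by
    intro w; rw [hy, dot_add, dot_smul, dot_smul]
  have hyp : dot (intCast p.1) y = p.2 := by
    rw [hdoty, ht]
    field_simp
    ring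
  have hystrict : ∀ q ∈ F.erase p, dot (intCast q.1) y < q.2 := by
    intro q hq
    rw [hdoty]
    have h1 := hx₀ q (Finset.mem_of_mem_erase hq)
    have h2 := hz q hq
    nlinarith
  -- the touching set contains a relatively open disc around y
  set T : Set (Fin d → ℝ) := {x | x ∈ isol F ∧ dot (intCast p.1) x = p.2} with hT
  set δ : ℝ := if hne : (F.erase p).Nonempty
    then (F.erase p).inf' hne
      (fun q => (q.2 - dot (intCast q.1) y) / ((∑ i, |(intCast q.1) i|) + 1))
    else 1 with hδ
  have hδpos : 0 < δ := by
    rw [hδ]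
    split_ifs with hne
    · rw [Finset.lt_inf'_iff]
      intro q hq
      have h1 := hystrict q hq
      exact div_pos (by linarith) (by positivity)
    · norm_num
  have hδle : ∀ q ∈ F.erase p,
      δ ≤ (q.2 - dot (intCast q.1) y) / ((∑ i, |(intCast q.1) i|) + 1) := by
    intro q hq
    rw [hδ]
    rw [dif_pos ⟨q, hq⟩]
    exact Finset.inf'_le _ hq
  have hmem : ∀ u : Fin d → ℝ, dot (intCast p.1) u = 0 → ‖u‖ < δ → y + u ∈ T := by
    intro u hu hun
    refine ⟨?_, ?_⟩
    · intro q hq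
      rcases eq_or_ne q p with rfl | hqp
      · rw [dot_add, hyp, hu, add_zero]
      · have hqe : q ∈ F.erase p := Finset.mem_erase.mpr ⟨hqp, hq⟩
        rw [dot_add]
        have habs : |dot (intCast q.1) u| ≤ (∑ i, |(intCast q.1) i|) * ‖u‖ :=
          abs_dot_le _ _
        have h2 : (0:ℝ) ≤ ∑ i, |(intCast q.1) i| :=
          Finset.sum_nonneg fun i _ => abs_nonneg _
        have h3 := hδle q hqe
        have hBpos : (0:ℝ) < (∑ i, |(intCast q.1) i|) + 1 := by positivity
        have h4 : ((∑ i, |(intCast q.1) i|) + 1) * δ ≤ q.2 - dot (intCast q.1) y := by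
          have h6 := (le_div_iff₀ hBpos).mp h3
          nlinarith
        have h5 : dot (intCast q.1) u < ((∑ i, |(intCast q.1) i|) + 1) * δ := by
          have := le_abs_self (dot (intCast q.1) u)
          have hnn := norm_nonneg u
          nlinarith
        linarith
    · rw [dot_add, hyp, hu, add_zero]
  -- the vector span of T equals the kernel of the normal
  have hTy : y ∈ T := by
    refine ⟨fun q hq => ?_, hyp⟩
    rcases eq_or_ne q p with rfl | hqp
    · rw [hyp]
    · exact le_of_lt (hystrict q (Finset.mem_erase.mpr ⟨hqp, hq⟩))
  have hker_le : LinearMap.ker (dotLM (intCast p.1)) ≤ vectorSpan ℝ T := by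
    intro u hu
    simp only [LinearMap.mem_ker, dotLM_apply] at hu
    set ε : ℝ := δ / (2 * (‖u‖ + 1)) with hε
    have hεpos : 0 < ε := by rw [hε]; positivity
    have hεu : ‖ε • u‖ < δ := by
      rw [norm_smul, Real.norm_eq_abs, abs_of_pos hεpos, hε]
      rw [div_mul_eq_mul_div, div_lt_iff₀ (by positivity)]
      nlinarith [norm_nonneg u, hδpos]
    have hεuk : dot (intCast p.1) (ε • u) = 0 := by rw [dot_smul, hu, mul_zero]
    have hmem1 : y + ε • u ∈ T := hmem _ hεuk hεu
    have hdiff : (y + ε • u) -ᵥ y ∈ vectorSpan ℝ T := vsub_mem_vectorSpan ℝ hmem1 hTy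
    have heq : (y + ε • u) -ᵥ y = ε • u := by
      rw [vsub_eq_sub]; abel
    rw [heq] at hdiff
    have := (vectorSpan ℝ T).smul_mem ε⁻¹ hdiff
    rwa [inv_smul_smul₀ (ne_of_gt hεpos)] at this
  have hle_ker : vectorSpan ℝ T ≤ LinearMap.ker (dotLM (intCast p.1)) :=
    vectorSpan_le_ker (b := p.2) (fun x hx => hx.2)
  have hspan : vectorSpan ℝ T = LinearMap.ker (dotLM (intCast p.1)) :=
    le_antisymm hle_ker hker_le
  rw [hT] at hspan
  rw [hspan, finrank_ker_dot hprim]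

end Part5
section Part6

/-- Rational-coefficient dot product with real points. -/
def qdot {n : ℕ} (w : Fin n → ℚ) (x : Fin n → ℝ) : ℝ := ∑ i, (w i : ℝ) * x i

/-- Solution set of a finite rational system. -/
def qsol {n : ℕ} (S : Finset ((Fin n → ℚ) × ℚ)) : Set (Fin n → ℝ) :=
  {x | ∀ p ∈ S, qdot p.1 x ≤ (p.2 : ℝ)}

lemma qdot_combo {n : ℕ} (α β : ℚ) (w1 w2 : Fin n → ℚ) (y : Fin n → ℝ) :
    qdot (fun i => α * w1 i + β * w2 i) y
      = (α:ℝ) * qdot w1 y + (β:ℝ) * qdot w2 y := by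
  unfold qdot
  rw [Finset.mul_sum, Finset.mul_sum, ← Finset.sum_add_distrib]
  refine Finset.sum_congr rfl fun i _ => ?_
  push_cast
  ring

lemma qdot_split {n : ℕ} (w : Fin (n+1) → ℚ) (x : Fin (n+1) → ℝ) :
    qdot w x = qdot (fun i => w i.castSucc) (fun i => x i.castSucc)
      + (w (Fin.last n) : ℝ) * x (Fin.last n) := by
  unfold qdot
  rw [Fin.sum_univ_castSucc]

/-- One step of Fourier–Motzkin elimination (eliminating the last variable). -/
def fmElim {n : ℕ} (S : Finset ((Fin (n+1) → ℚ) × ℚ)) : Finset ((Fin n → ℚ) × ℚ) :=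
  ((S.filter (fun p => p.1 (Fin.last n) = 0)).image
      (fun p => ((fun i => p.1 i.castSucc), p.2)))
  ∪ (((S.filter (fun p => 0 < p.1 (Fin.last n))) ×ˢ
      (S.filter (fun p => p.1 (Fin.last n) < 0))).image
      (fun pq =>
        ((fun i => (-(pq.2.1 (Fin.last n))) * pq.1.1 i.castSucc
            + pq.1.1 (Fin.last n) * pq.2.1 i.castSucc),
         (-(pq.2.1 (Fin.last n))) * pq.1.2 + pq.1.1 (Fin.last n) * pq.2.2)))

lemma mem_fmElim_zero {n : ℕ} {S : Finset ((Fin (n+1) → ℚ) × ℚ)}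
    {p : (Fin (n+1) → ℚ) × ℚ} (hp : p ∈ S) (h0 : p.1 (Fin.last n) = 0) :
    ((fun i => p.1 i.castSucc), p.2) ∈ fmElim S := by
  apply Finset.mem_union_left
  exact Finset.mem_image.mpr ⟨p, Finset.mem_filter.mpr ⟨hp, h0⟩, rfl⟩

lemma mem_fmElim_pair {n : ℕ} {S : Finset ((Fin (n+1) → ℚ) × ℚ)}
    {p q : (Fin (n+1) → ℚ) × ℚ} (hp : p ∈ S) (hq : q ∈ S)
    (hwp : 0 < p.1 (Fin.last n)) (hwq : q.1 (Fin.last n) < 0) :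
    ((fun i => (-(q.1 (Fin.last n))) * p.1 i.castSucc
        + p.1 (Fin.last n) * q.1 i.castSucc),
      (-(q.1 (Fin.last n))) * p.2 + p.1 (Fin.last n) * q.2) ∈ fmElim S := by
  apply Finset.mem_union_right
  exact Finset.mem_image.mpr ⟨(p, q),
    Finset.mem_product.mpr ⟨Finset.mem_filter.mpr ⟨hp, hwp⟩, Finset.mem_filter.mpr ⟨hq, hwq⟩⟩, rfl⟩

lemma qsol_fmElim {n : ℕ} (S : Finset ((Fin (n+1) → ℚ) × ℚ)) :
    qsol (fmElim S) = (fun x : Fin (n+1) → ℝ => fun i => x i.castSucc) '' qsol S := by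
  apply Set.Subset.antisymm
  · -- hard direction: a solution of the eliminated system lifts
    intro y hy
    classical
    set Sp := S.filter (fun p => 0 < p.1 (Fin.last n)) with hSp
    set Sm := S.filter (fun p => p.1 (Fin.last n) < 0) with hSm
    set U : ((Fin (n+1) → ℚ) × ℚ) → ℝ :=
      fun p => ((p.2:ℝ) - qdot (fun i => p.1 i.castSucc) y) / ((p.1 (Fin.last n) : ℚ) : ℝ) with hU
    -- the key pair inequality
    have hpair : ∀ p ∈ Sp, ∀ q ∈ Sm, U q ≤ U p := by
      intro p hp q hq
      have hpS := (Finset.mem_filter.mp hp).1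
      have hwp : (0:ℝ) < ((p.1 (Fin.last n) : ℚ) : ℝ) := by
        exact_mod_cast (Finset.mem_filter.mp hp).2
      have hqS := (Finset.mem_filter.mp hq).1
      have hwq : ((q.1 (Fin.last n) : ℚ) : ℝ) < 0 := by
        exact_mod_cast (Finset.mem_filter.mp hq).2
      have hmem := mem_fmElim_pair hpS hqS (Finset.mem_filter.mp hp).2 (Finset.mem_filter.mp hq).2
      have hcomb := hy _ hmem
      rw [qdot_combo] at hcomb
      push_cast at hcomb
      set Apv := qdot (fun i => p.1 i.castSucc) y
      set Aqv := qdot (fun i => q.1 i.castSucc) y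
      have e1 : U q * ((q.1 (Fin.last n) : ℚ) : ℝ) = (q.2:ℝ) - Aqv :=
        div_mul_cancel₀ _ (ne_of_lt hwq)
      have e2 : U p * ((p.1 (Fin.last n) : ℚ) : ℝ) = (p.2:ℝ) - Apv :=
        div_mul_cancel₀ _ (ne_of_gt hwp)
      have key : ((p.1 (Fin.last n) : ℚ) : ℝ) * ((q.2:ℝ) - Aqv)
          - ((q.1 (Fin.last n) : ℚ) : ℝ) * ((p.2:ℝ) - Apv) ≥ 0 := by nlinarith [hcomb]
      have key2 : ((p.1 (Fin.last n) : ℚ) : ℝ) * (U q * ((q.1 (Fin.last n) : ℚ) : ℝ))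
          - ((q.1 (Fin.last n) : ℚ) : ℝ) * (U p * ((p.1 (Fin.last n) : ℚ) : ℝ)) ≥ 0 := by
        rw [e1, e2]; exact key
      have key3 : ((p.1 (Fin.last n) : ℚ) : ℝ) * ((q.1 (Fin.last n) : ℚ) : ℝ)
          * (U q - U p) ≥ 0 := by nlinarith [key2]
      have hWpWq : ((p.1 (Fin.last n) : ℚ) : ℝ) * ((q.1 (Fin.last n) : ℚ) : ℝ) < 0 :=
        mul_neg_of_pos_of_neg hwp hwq
      nlinarith [key3, hWpWq]
    by_cases hplus : Sp.Nonempty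
    · obtain ⟨p₀, hp₀, hp₀min⟩ := Finset.exists_min_image Sp U hplus
      set t := U p₀ with htdef
      refine ⟨Fin.snoc y t, ?_, ?_⟩
      · intro p hp
        rw [qdot_split]
        have hproj : (fun i : Fin n => (Fin.snoc y t : Fin (n+1) → ℝ) i.castSucc) = y := by
          funext i; exact Fin.snoc_castSucc _ _ _
        rw [hproj, Fin.snoc_last]
        rcases lt_trichotomy (p.1 (Fin.last n)) 0 with hw | hw | hw
        · -- minus constraint
          have hpm : p ∈ Sm := Finset.mem_filter.mpr ⟨hp, hw⟩
          have hple := hpair p₀ hp₀ p hpm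
          have hwp₀ : (0:ℝ) < ((p₀.1 (Fin.last n) : ℚ) : ℝ) := by
            exact_mod_cast (Finset.mem_filter.mp hp₀).2
          have hwpr : ((p.1 (Fin.last n) : ℚ) : ℝ) < 0 := by exact_mod_cast hw
          have hUp : ((p.1 (Fin.last n) : ℚ) : ℝ) * U p
              = (p.2:ℝ) - qdot (fun i => p.1 i.castSucc) y := by
            rw [hU]
            rw [mul_div_cancel₀ _ (ne_of_lt hwpr)]
          have h1 : ((p.1 (Fin.last n) : ℚ) : ℝ) * t ≤ ((p.1 (Fin.last n) : ℚ) : ℝ) * U p := by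
            rw [htdef]
            exact mul_le_mul_of_nonpos_left (hple) (le_of_lt hwpr)
          rw [hUp] at h1
          linarith
        · rw [hw]
          have hmem := mem_fmElim_zero hp hw
          have := hy _ hmem
          push_cast
          linarith [this]
        · have hpp : p ∈ Sp := Finset.mem_filter.mpr ⟨hp, hw⟩
          have hple := hp₀min p hpp
          have hwpr : (0:ℝ) < ((p.1 (Fin.last n) : ℚ) : ℝ) := by exact_mod_cast hw
          have hUp : ((p.1 (Fin.last n) : ℚ) : ℝ) * U p
              = (p.2:ℝ) - qdot (fun i => p.1 i.castSucc) y := by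
            rw [hU, mul_div_cancel₀ _ (ne_of_gt hwpr)]
          have h1 : ((p.1 (Fin.last n) : ℚ) : ℝ) * t ≤ ((p.1 (Fin.last n) : ℚ) : ℝ) * U p := by
            rw [htdef]
            exact mul_le_mul_of_nonneg_left hple (le_of_lt hwpr)
          rw [hUp] at h1
          linarith
      · funext i; exact Fin.snoc_castSucc _ _ _
    · -- no positive constraints
      by_cases hminus : Sm.Nonempty
      · obtain ⟨q₀, hq₀, hq₀max⟩ := Finset.exists_max_image Sm U hminus
        set t := U q₀ with htdef
        refine ⟨Fin.snoc y t, ?_, ?_⟩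
        · intro p hp
          rw [qdot_split]
          have hproj : (fun i : Fin n => (Fin.snoc y t : Fin (n+1) → ℝ) i.castSucc) = y := by
            funext i; exact Fin.snoc_castSucc _ _ _
          rw [hproj, Fin.snoc_last]
          rcases lt_trichotomy (p.1 (Fin.last n)) 0 with hw | hw | hw
          · have hpm : p ∈ Sm := Finset.mem_filter.mpr ⟨hp, hw⟩
            have hple := hq₀max p hpm
            have hwpr : ((p.1 (Fin.last n) : ℚ) : ℝ) < 0 := by exact_mod_cast hw
            have hUp : ((p.1 (Fin.last n) : ℚ) : ℝ) * U p
                = (p.2:ℝ) - qdot (fun i => p.1 i.castSucc) y := by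
              rw [hU, mul_div_cancel₀ _ (ne_of_lt hwpr)]
            have h1 : ((p.1 (Fin.last n) : ℚ) : ℝ) * t ≤ ((p.1 (Fin.last n) : ℚ) : ℝ) * U p := by
              rw [htdef]
              exact mul_le_mul_of_nonpos_left hple (le_of_lt hwpr)
            rw [hUp] at h1
            linarith
          · rw [hw]
            have hmem := mem_fmElim_zero hp hw
            have := hy _ hmem
            push_cast
            linarith [this]
          · exact absurd ⟨p, Finset.mem_filter.mpr ⟨hp, hw⟩⟩ hplus
        · funext i; exact Fin.snoc_castSucc _ _ _
      · refine ⟨Fin.snoc y 0, ?_, ?_⟩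
        · intro p hp
          rw [qdot_split]
          have hproj : (fun i : Fin n => (Fin.snoc y (0:ℝ) : Fin (n+1) → ℝ) i.castSucc) = y := by
            funext i; exact Fin.snoc_castSucc _ _ _
          rw [hproj, Fin.snoc_last]
          rcases lt_trichotomy (p.1 (Fin.last n)) 0 with hw | hw | hw
          · exact absurd ⟨p, Finset.mem_filter.mpr ⟨hp, hw⟩⟩ hminus
          · rw [hw]
            have := hy _ (mem_fmElim_zero hp hw)
            push_cast
            linarith [this]
          · exact absurd ⟨p, Finset.mem_filter.mpr ⟨hp, hw⟩⟩ hplus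
        · funext i; exact Fin.snoc_castSucc _ _ _
  · -- easy direction
    rintro y ⟨x, hx, rfl⟩
    intro r hr
    rcases Finset.mem_union.mp hr with h | h
    · obtain ⟨p, hpf, rfl⟩ := Finset.mem_image.mp h
      obtain ⟨hpS, hw0⟩ := Finset.mem_filter.mp hpf
      have := hx p hpS
      rw [qdot_split] at this
      rw [hw0] at this
      push_cast at this
      simpa using this
    · obtain ⟨pq, hpqf, rfl⟩ := Finset.mem_image.mp h
      obtain ⟨hpf, hqf⟩ := Finset.mem_product.mp hpqf
      obtain ⟨hpS, hwp⟩ := Finset.mem_filter.mp hpf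
      obtain ⟨hqS, hwq⟩ := Finset.mem_filter.mp hqf
      have h1 := hx pq.1 hpS
      have h2 := hx pq.2 hqS
      rw [qdot_split] at h1 h2
      have hwp' : (0:ℝ) < ((pq.1.1 (Fin.last n) : ℚ) : ℝ) := by exact_mod_cast hwp
      have hwq' : ((pq.2.1 (Fin.last n) : ℚ) : ℝ) < 0 := by exact_mod_cast hwq
      rw [qdot_combo]
      push_cast
      nlinarith
  
lemma qsol_elim_all {n : ℕ} : ∀ (m : ℕ) (S : Finset ((Fin (n+m) → ℚ) × ℚ)),
    ∃ S' : Finset ((Fin n → ℚ) × ℚ),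
      qsol S' = (fun x : Fin (n+m) → ℝ => fun i => x (Fin.castAdd m i)) '' qsol S := by
  intro m
  induction m with
  | zero =>
    intro S
    refine ⟨S, ?_⟩
    have : (fun x : Fin (n+0) → ℝ => fun i : Fin n => x (Fin.castAdd 0 i)) = id := by
      funext x
      funext i
      have : Fin.castAdd 0 i = i := by
        apply Fin.ext; rfl
      rw [this]; rfl
    rw [this, Set.image_id]
  | succ m ih =>
    intro S
    obtain ⟨S₁, hS₁⟩ := ih (fmElim (S : Finset ((Fin ((n+m)+1) → ℚ) × ℚ)))
    refine ⟨S₁, ?_⟩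
    rw [hS₁, qsol_fmElim, ← Set.image_comp]
    have hcomp : ((fun x : Fin (n+m) → ℝ => fun i : Fin n => x (Fin.castAdd m i)) ∘
        (fun x : Fin (n+m+1) → ℝ => fun i : Fin (n+m) => x i.castSucc))
        = (fun x : Fin (n+(m+1)) → ℝ => fun i : Fin n => x (Fin.castAdd (m+1) i)) := by
      funext x i
      show x ((Fin.castAdd m i).castSucc) = x (Fin.castAdd (m+1) i)
      congr 1
    rw [hcomp]

end Part6
section Part7

variable {d : ℕ}

lemma qdot_zero_left (x : Fin d → ℝ) : qdot (0 : Fin d → ℚ) x = 0 := by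
  unfold qdot; simp

lemma qdot_zero_right (w : Fin d → ℚ) : qdot w (0 : Fin d → ℝ) = 0 := by
  unfold qdot; simp

lemma qdot_neg_left (w : Fin d → ℚ) (x : Fin d → ℝ) : qdot (-w) x = - qdot w x := by
  unfold qdot
  rw [← Finset.sum_neg_distrib]
  refine Finset.sum_congr rfl fun i _ => ?_
  simp only [Pi.neg_apply]
  push_cast
  ring

lemma sum_V_eq {V : Finset (Fin d → ℤ)} {β : Type*} [AddCommMonoid β]
    (G : (Fin d → ℤ) → β) :
    ∑ v ∈ V, G v = ∑ k : Fin V.card, G ((V.equivFin.symm k).val) := by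
  classical
  have h1 : ∑ v ∈ V, G v = ∑ s : {x // x ∈ V}, G s.val := (Finset.sum_coe_sort V G).symm
  rw [h1]
  exact Fintype.sum_equiv V.equivFin _ _ (fun s => by rw [Equiv.symm_apply_apply])

lemma exists_qrep {P : Set (Fin d → ℝ)} {V : Finset (Fin d → ℤ)}
    (hP : P = convexHull ℝ (intCast '' (V : Set (Fin d → ℤ)))) :
    ∃ S : Finset ((Fin d → ℚ) × ℚ), qsol S = P := by
  classical
  set m := V.card with hm
  set vs : Fin m → (Fin d → ℤ) := fun k => (V.equivFin.symm k).val with hvs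
  have hvsV : ∀ k, vs k ∈ V := fun k => (V.equivFin.symm k).2
  set wE : Fin d → (Fin (d+m) → ℚ) := fun j =>
    Fin.addCases (fun j' : Fin d => if j' = j then (1:ℚ) else 0)
      (fun k : Fin m => -((vs k j : ℤ) : ℚ)) with hwE
  set wN : Fin m → (Fin (d+m) → ℚ) := fun k =>
    Fin.addCases (fun _ : Fin d => (0:ℚ))
      (fun k' : Fin m => if k' = k then (-1:ℚ) else 0) with hwN
  set wS : Fin (d+m) → ℚ :=
    Fin.addCases (fun _ : Fin d => (0:ℚ)) (fun _ : Fin m => (1:ℚ)) with hwS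
  set Z : Finset ((Fin (d+m) → ℚ) × ℚ) :=
    ((Finset.univ.image (fun j : Fin d => (wE j, (0:ℚ))))
    ∪ (Finset.univ.image (fun j : Fin d => (-wE j, (0:ℚ))))
    ∪ (Finset.univ.image (fun k : Fin m => (wN k, (0:ℚ)))))
    ∪ {(wS, 1), (-wS, -1)} with hZ
  -- evaluation lemmas
  have hqE : ∀ (j : Fin d) (x : Fin (d+m) → ℝ), qdot (wE j) x
      = x (Fin.castAdd m j) - ∑ k, ((vs k j : ℤ):ℝ) * x (Fin.natAdd d k) := by
    intro j x
    unfold qdot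
    rw [Fin.sum_univ_add]
    have h1 : ∑ j' : Fin d, ((wE j (Fin.castAdd m j') : ℚ) : ℝ) * x (Fin.castAdd m j')
        = x (Fin.castAdd m j) := by
      rw [Finset.sum_eq_single j]
      · rw [hwE]; simp [Fin.addCases_left]
      · intro j' _ hj'
        rw [hwE]; simp [Fin.addCases_left, hj']
      · intro h; exact absurd (Finset.mem_univ j) h
    have h2 : ∀ k : Fin m, ((wE j (Fin.natAdd d k) : ℚ) : ℝ) * x (Fin.natAdd d k)
        = -(((vs k j : ℤ):ℝ) * x (Fin.natAdd d k)) := by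
      intro k
      rw [hwE]; simp [Fin.addCases_right]
    rw [h1, Finset.sum_congr rfl (fun k _ => h2 k), Finset.sum_neg_distrib]
    ring
  have hqN : ∀ (k : Fin m) (x : Fin (d+m) → ℝ), qdot (wN k) x
      = - x (Fin.natAdd d k) := by
    intro k x
    unfold qdot
    rw [Fin.sum_univ_add]
    have h1 : ∑ j' : Fin d, ((wN k (Fin.castAdd m j') : ℚ) : ℝ) * x (Fin.castAdd m j') = 0 := by
      refine Finset.sum_eq_zero fun j' _ => ?_
      rw [hwN]; simp [Fin.addCases_left]
    have h2 : ∑ k' : Fin m, ((wN k (Fin.natAdd d k') : ℚ) : ℝ) * x (Fin.natAdd d k')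
        = - x (Fin.natAdd d k) := by
      rw [Finset.sum_eq_single k]
      · rw [hwN]; simp [Fin.addCases_right]
      · intro k' _ hk'
        rw [hwN]; simp [Fin.addCases_right, hk']
      · intro h; exact absurd (Finset.mem_univ k) h
    rw [h1, h2]; ring
  have hqSum : ∀ (x : Fin (d+m) → ℝ), qdot wS x = ∑ k, x (Fin.natAdd d k) := by
    intro x
    unfold qdot
    rw [Fin.sum_univ_add]
    have h1 : ∑ j' : Fin d, ((wS (Fin.castAdd m j') : ℚ) : ℝ) * x (Fin.castAdd m j') = 0 := by
      refine Finset.sum_eq_zero fun j' _ => ?_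
      rw [hwS]; simp [Fin.addCases_left]
    have h2 : ∀ k : Fin m, ((wS (Fin.natAdd d k) : ℚ) : ℝ) * x (Fin.natAdd d k)
        = x (Fin.natAdd d k) := by
      intro k; rw [hwS]; simp [Fin.addCases_right]
    rw [h1, Finset.sum_congr rfl (fun k _ => h2 k), zero_add]
  -- memberships in Z
  have hmemE : ∀ j, (wE j, (0:ℚ)) ∈ Z := fun j => by
    rw [hZ]
    exact Finset.mem_union_left _ (Finset.mem_union_left _ (Finset.mem_union_left _
      (Finset.mem_image.mpr ⟨j, Finset.mem_univ j, rfl⟩)))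
  have hmemE' : ∀ j, (-wE j, (0:ℚ)) ∈ Z := fun j => by
    rw [hZ]
    exact Finset.mem_union_left _ (Finset.mem_union_left _ (Finset.mem_union_right _
      (Finset.mem_image.mpr ⟨j, Finset.mem_univ j, rfl⟩)))
  have hmemN : ∀ k, (wN k, (0:ℚ)) ∈ Z := fun k => by
    rw [hZ]
    exact Finset.mem_union_left _ (Finset.mem_union_right _
      (Finset.mem_image.mpr ⟨k, Finset.mem_univ k, rfl⟩))
  have hmemS : (wS, (1:ℚ)) ∈ Z := by
    rw [hZ]
    exact Finset.mem_union_right _ (Finset.mem_insert_self _ _)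
  have hmemS' : (-wS, (-1:ℚ)) ∈ Z := by
    rw [hZ]
    exact Finset.mem_union_right _ (Finset.mem_insert.mpr (Or.inr (Finset.mem_singleton_self _)))
  obtain ⟨S, hS⟩ := qsol_elim_all m Z
  refine ⟨S, ?_⟩
  rw [hS, hP]
  apply Set.Subset.antisymm
  · rintro x ⟨xh, hxh, rfl⟩
    set lam : Fin m → ℝ := fun k => xh (Fin.natAdd d k) with hlam
    have hlamnn : ∀ k, 0 ≤ lam k := by
      intro k
      have := hxh _ (hmemN k)
      rw [hqN] at this
      push_cast at this
      linarith
    have hlsum : ∑ k, lam k = 1 := by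
      have h1 := hxh _ hmemS
      have h2 := hxh _ hmemS'
      rw [hqSum] at h1
      rw [qdot_neg_left, hqSum] at h2
      push_cast at h1 h2
      have : ∑ k, xh (Fin.natAdd d k) = 1 := by linarith
      exact this
    have heq : ∀ j, xh (Fin.castAdd m j) = ∑ k, ((vs k j : ℤ):ℝ) * lam k := by
      intro j
      have h1 := hxh _ (hmemE j)
      have h2 := hxh _ (hmemE' j)
      rw [hqE] at h1
      rw [qdot_neg_left, hqE] at h2
      push_cast at h1 h2
      have : xh (Fin.castAdd m j) = ∑ k, ((vs k j : ℤ):ℝ) * xh (Fin.natAdd d k) := by linarith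
      exact this
    have hxrep : (fun i => xh (Fin.castAdd m i)) = ∑ k, lam k • intCast (vs k) := by
      funext j
      rw [heq j, Finset.sum_apply]
      refine Finset.sum_congr rfl fun k _ => ?_
      simp only [Pi.smul_apply, smul_eq_mul, intCastVec_apply]
      ring
    show (fun i => xh (Fin.castAdd m i)) ∈ convexHull ℝ (intCast '' (V : Set (Fin d → ℤ)))
    rw [hxrep]
    exact (convex_convexHull ℝ _).sum_mem (fun k _ => hlamnn k) hlsum
      (fun k _ => subset_convexHull ℝ _ ⟨vs k, hvsV k, rfl⟩)
  · intro x hx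
    have hWcoe : intCast '' (V : Set (Fin d → ℤ)) = ((V.image intCast : Finset (Fin d → ℝ)) : Set (Fin d → ℝ)) := by
      rw [Finset.coe_image]
    rw [hWcoe, Finset.convexHull_eq] at hx
    obtain ⟨wf, hwf0, hwf1, hwfx⟩ := hx
    have hinj : ∀ a ∈ V, ∀ b ∈ V, intCast a = intCast b → a = b := by
      intro a _ b _ hab
      funext i
      have := congrFun hab i
      rw [intCastVec_apply, intCastVec_apply] at this
      exact_mod_cast this
    set lam : Fin m → ℝ := fun k => wf (intCast (vs k)) with hlam
    have hlamnn : ∀ k, 0 ≤ lam k := fun k =>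
      hwf0 _ (Finset.mem_image.mpr ⟨vs k, hvsV k, rfl⟩)
    have hsum_img : ∑ y ∈ V.image intCast, wf y = ∑ k, lam k := by
      rw [Finset.sum_image hinj]
      exact sum_V_eq (fun v => wf (intCast v))
    have hlsum : ∑ k, lam k = 1 := by rw [← hsum_img, hwf1]
    have hxrep : x = ∑ k, lam k • intCast (vs k) := by
      rw [← hwfx, Finset.centerMass_eq_of_sum_1 _ id hwf1]
      simp only [id_eq]
      rw [Finset.sum_image hinj]
      rw [sum_V_eq (fun v => wf (intCast v) • intCast v)]
    set xh : Fin (d+m) → ℝ := Fin.addCases (fun j => x j) lam with hxh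
    have hxhl : ∀ j, xh (Fin.castAdd m j) = x j := by
      intro j; rw [hxh]; exact Fin.addCases_left j
    have hxhr : ∀ k, xh (Fin.natAdd d k) = lam k := by
      intro k; rw [hxh]; exact Fin.addCases_right k
    refine ⟨xh, ?_, by funext j; exact hxhl j⟩
    intro p hp
    rw [hZ] at hp
    rcases Finset.mem_union.mp hp with hp1 | hp2
    · rcases Finset.mem_union.mp hp1 with hp3 | hp4
      · rcases Finset.mem_union.mp hp3 with hp5 | hp6
        · obtain ⟨j, _, rfl⟩ := Finset.mem_image.mp hp5
          rw [hqE]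
          have : ∑ k, ((vs k j : ℤ):ℝ) * xh (Fin.natAdd d k) = x j := by
            rw [Finset.sum_congr rfl (fun k _ => by rw [hxhr k])]
            rw [hxrep, Finset.sum_apply]
            refine Finset.sum_congr rfl fun k _ => ?_
            simp only [Pi.smul_apply, smul_eq_mul, intCastVec_apply]
            ring
          rw [this, hxhl]
          norm_num
        · obtain ⟨j, _, rfl⟩ := Finset.mem_image.mp hp6
          rw [qdot_neg_left, hqE]
          have : ∑ k, ((vs k j : ℤ):ℝ) * xh (Fin.natAdd d k) = x j := by
            rw [Finset.sum_congr rfl (fun k _ => by rw [hxhr k])]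
            rw [hxrep, Finset.sum_apply]
            refine Finset.sum_congr rfl fun k _ => ?_
            simp only [Pi.smul_apply, smul_eq_mul, intCastVec_apply]
            ring
          rw [this, hxhl]
          norm_num
      · obtain ⟨k, _, rfl⟩ := Finset.mem_image.mp hp4
        rw [hqN, hxhr]
        have := hlamnn k
        push_cast
        linarith
    · rcases Finset.mem_insert.mp hp2 with rfl | hp5
      · rw [hqSum]
        rw [Finset.sum_congr rfl (fun k _ => by rw [hxhr k]), hlsum]
        norm_num
      · rw [Finset.mem_singleton.mp hp5]
        rw [qdot_neg_left, hqSum]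
        rw [Finset.sum_congr rfl (fun k _ => by rw [hxhr k]), hlsum]
        norm_num

end Part7
section Part8

variable {d : ℕ}

lemma int_gcd_nonneg {ι : Type*} (s : Finset ι) (f : ι → ℤ) : 0 ≤ s.gcd f := by
  classical
  induction s using Finset.induction_on with
  | empty => simp [Finset.gcd_empty]
  | insert hnotmem ih =>
    rw [Finset.gcd_insert, ← Int.coe_gcd]
    positivity

lemma primitive_scale (hd1 : 1 ≤ d) {w : Fin d → ℚ} (hw : w ≠ 0) :
    ∃ (a : Fin d → ℤ) (r : ℝ), 0 < r ∧ Finset.univ.gcd a = 1 ∧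
      ∀ x : Fin d → ℝ, dot (intCast a) x = r * qdot w x := by
  classical
  haveI : Nonempty (Fin d) := ⟨⟨0, hd1⟩⟩
  set N : ℕ := ∏ i, (w i).den with hN
  have hNpos : 0 < N := Finset.prod_pos fun i _ => (w i).pos
  set b : Fin d → ℤ := fun i => (w i).num * ((N : ℤ) / ((w i).den : ℤ)) with hb
  have hbq : ∀ i, ((b i : ℤ) : ℚ) = w i * (N : ℚ) := by
    intro i
    have hdvd : ((w i).den : ℤ) ∣ (N : ℤ) :=
      Int.natCast_dvd_natCast.mpr
        (Finset.dvd_prod_of_mem (fun i => (w i).den) (Finset.mem_univ i))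
    obtain ⟨e, he⟩ := hdvd
    have hden0 : ((w i).den : ℤ) ≠ 0 := by
      have := (w i).pos
      omega
    rw [hb]
    simp only
    rw [he, Int.mul_ediv_cancel_left _ hden0]
    have heq : (N:ℚ) = ((w i).den : ℚ) * ((e:ℤ):ℚ) := by
      exact_mod_cast congrArg (fun z : ℤ => (z:ℚ)) he
    have hdq : ((w i).den : ℚ) ≠ 0 := by exact_mod_cast hden0
    have e1 : ((w i).num : ℚ) / ((w i).den : ℚ) = w i := Rat.num_div_den (w i)
    have hwd : ((w i).num : ℚ) = w i * ((w i).den : ℚ) := (div_eq_iff hdq).mp e1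
    push_cast
    rw [heq, hwd]
    ring
  obtain ⟨i₀, hi₀⟩ : ∃ i, w i ≠ 0 := by
    by_contra h
    push_neg at h
    exact hw (funext h)
  have hb₀ : b i₀ ≠ 0 := by
    intro h
    have hq := hbq i₀
    rw [h] at hq
    have hNne : (N:ℚ) ≠ 0 := by positivity
    exact (mul_ne_zero hi₀ hNne) (by exact_mod_cast hq.symm)
  obtain ⟨g, hg1, hg2⟩ := Finset.extract_gcd b Finset.univ_nonempty
  set G : ℤ := Finset.univ.gcd b with hG
  have hGne : G ≠ 0 := by
    intro h
    apply hb₀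
    have hbi := hg1 i₀ (Finset.mem_univ i₀)
    rw [h, zero_mul] at hbi
    exact hbi
  have hGpos : 0 < G := lt_of_le_of_ne (int_gcd_nonneg _ _) (Ne.symm hGne)
  have hGR : (0:ℝ) < ((G:ℤ):ℝ) := by exact_mod_cast hGpos
  refine ⟨g, (N:ℝ)/((G:ℤ):ℝ), by positivity, hg2, ?_⟩
  intro x
  unfold dot qdot
  rw [Finset.mul_sum]
  refine Finset.sum_congr rfl fun i _ => ?_
  have h1 : ((b i : ℤ):ℝ) = ((w i : ℚ):ℝ) * (N:ℝ) := by exact_mod_cast hbq i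
  have h2 : ((b i : ℤ):ℝ) = ((G:ℤ):ℝ) * ((g i:ℤ):ℝ) := by
    exact_mod_cast hg1 i (Finset.mem_univ i)
  have h3 : ((G:ℤ):ℝ) * ((g i:ℤ):ℝ) = ((w i:ℚ):ℝ) * (N:ℝ) := by rw [← h2, h1]
  rw [intCastVec_apply]
  rw [div_mul_eq_mul_div, eq_div_iff (ne_of_gt hGR)]
  linear_combination x i * h3

lemma ratsys_to_int {P : Set (Fin d → ℝ)} (hd1 : 1 ≤ d) {S : Finset ((Fin d → ℚ) × ℚ)}
    (hS : qsol S = P) (h0 : (0 : Fin d → ℝ) ∈ P) :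
    ∃ F : Finset ((Fin d → ℤ) × ℝ), isol F = P ∧ ∀ p ∈ F, Finset.univ.gcd p.1 = 1 := by
  classical
  set S' := S.filter (fun p => p.1 ≠ 0) with hS'
  have hps : ∀ p : {q // q ∈ S'}, ∃ (a : Fin d → ℤ) (r : ℝ), 0 < r ∧
      Finset.univ.gcd a = 1 ∧ ∀ x, dot (intCast a) x = r * qdot p.val.1 x := fun p =>
    primitive_scale hd1 (Finset.mem_filter.mp p.2).2
  choose fa fr hfr hfgcd hfa using hps
  set F := S'.attach.image (fun p => (fa p, fr p * ((p.val.2 : ℚ) : ℝ))) with hF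
  refine ⟨F, ?_, ?_⟩
  · rw [← hS]
    ext x
    simp only [isol, qsol, Set.mem_setOf_eq]
    constructor
    · intro hx p hpS
      by_cases hp0 : p.1 = 0
      · have h0q : (0 : Fin d → ℝ) ∈ qsol S := by rw [hS]; exact h0
        have h00 := h0q p hpS
        rw [qdot_zero_right] at h00
        rw [hp0, qdot_zero_left]
        exact h00
      · have hpS' : p ∈ S' := Finset.mem_filter.mpr ⟨hpS, hp0⟩
        have hmem : (fa ⟨p, hpS'⟩, fr ⟨p, hpS'⟩ * ((p.2:ℚ):ℝ)) ∈ F :=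
          Finset.mem_image.mpr ⟨⟨p, hpS'⟩, Finset.mem_attach _ _, rfl⟩
        have hle := hx _ hmem
        rw [hfa ⟨p, hpS'⟩] at hle
        exact (mul_le_mul_iff_of_pos_left (hfr ⟨p, hpS'⟩)).mp hle
    · intro hx q hqF
      obtain ⟨p, _, rfl⟩ := Finset.mem_image.mp hqF
      rw [hfa p]
      exact mul_le_mul_of_nonneg_left (hx p.val (Finset.mem_filter.mp p.2).1) (hfr p).le
  · intro q hqF
    obtain ⟨p, _, rfl⟩ := Finset.mem_image.mp hqF
    exact hfgcd p

end Part8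
section Part9

variable {d : ℕ} {P : Set (Fin d → ℝ)} {V : Finset (Fin d → ℤ)}

lemma gcd_single_unit {a : Fin d → ℤ} {j : Fin d}
    (hzero : ∀ i, i ≠ j → a i = 0) (hu : a j = 1 ∨ a j = -1) :
    Finset.univ.gcd a = 1 := by
  have hdvd : Finset.univ.gcd a ∣ a j := Finset.gcd_dvd (Finset.mem_univ j)
  have hunit : IsUnit (Finset.univ.gcd a) := by
    rcases hu with h | h
    · rw [h] at hdvd; exact isUnit_of_dvd_one hdvd
    · rw [h] at hdvd
      exact isUnit_of_dvd_unit hdvd (by norm_num)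
  rcases Int.isUnit_iff.mp hunit with h | h
  · exact h
  · exfalso
    have := int_gcd_nonneg Finset.univ a
    omega

lemma backward_sigma
    (hP : P = convexHull ℝ (intCast '' (V : Set (Fin d → ℤ))))
    (h0 : 0 ∈ interior P)
    (hlab : ∀ σ : Fin d → ℝ, IsSignVec σ →
      IsAntiBlocking ((sflip σ '' P) ∩ nonnegOrthant d))
    (hd1 : 1 ≤ d)
    {F₀ : Finset ((Fin d → ℤ) × ℝ)} (hF₀ : isol F₀ = P)
    (hF₀gcd : ∀ p ∈ F₀, Finset.univ.gcd p.1 = 1)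
    {σ : Fin d → ℝ} (hσ : IsSignVec σ)
    (hwidth : HasFacetWidthOne (P ∩ {x | ∀ i, 0 ≤ σ i * x i})) :
    ∃ B : Finset (Fin d → ℤ),
      (∀ a ∈ B, ∀ x ∈ P ∩ {x | ∀ i, 0 ≤ σ i * x i}, dot (intCast a) x ≤ 1) ∧
      (∀ a ∈ B, ∀ i, 0 ≤ σ i * ((a i : ℤ):ℝ)) ∧
      (∀ z, (∀ i, 0 ≤ σ i * z i) → (∀ a ∈ B, dot (intCast a) z ≤ 1) → z ∈ P) := by
  classical
  set Q : Set (Fin d → ℝ) := P ∩ {x | ∀ i, 0 ≤ σ i * x i} with hQdef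
  have hQcomp : IsCompact Q := (P_compact hP).inter_right (orthant_closed σ)
  have h0Q : (0 : Fin d → ℝ) ∈ Q := ⟨interior_subset h0, fun i => by simp⟩
  -- coordinate constraint vectors
  have hcvex : ∀ j : Fin d, ∃ cv : Fin d → ℤ,
      (∀ x : Fin d → ℝ, dot (intCast cv) x = -(σ j) * x j) ∧
      Finset.univ.gcd cv = 1 := by
    intro j
    rcases hσ j with h | h
    · refine ⟨fun i => if i = j then -1 else 0, fun x => ?_, ?_⟩
      · unfold dot
        rw [Finset.sum_eq_single j]
        · simp only [intCastVec_apply, if_pos rfl, h]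
          push_cast; ring
        · intro i _ hij
          simp only [intCastVec_apply, if_neg hij]
          norm_num
        · intro hcontra; exact absurd (Finset.mem_univ j) hcontra
      · exact gcd_single_unit (fun i hij => if_neg hij) (Or.inr (if_pos rfl))
    · refine ⟨fun i => if i = j then 1 else 0, fun x => ?_, ?_⟩
      · unfold dot
        rw [Finset.sum_eq_single j]
        · simp only [intCastVec_apply, if_pos rfl, h]
          push_cast; ring
        · intro i _ hij
          simp only [intCastVec_apply, if_neg hij]
          norm_num
        · intro hcontra; exact absurd (Finset.mem_univ j) hcontra
      · exact gcd_single_unit (fun i hij => if_neg hij) (Or.inl (if_pos rfl))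
  choose cvec hcv hcvgcd using hcvex
  -- the full system for Q
  set Fσ : Finset ((Fin d → ℤ) × ℝ) :=
    F₀ ∪ Finset.univ.image (fun j => (cvec j, (0:ℝ))) with hFσ
  have hgcdFσ : ∀ p ∈ Fσ, Finset.univ.gcd p.1 = 1 := by
    intro p hp
    rcases Finset.mem_union.mp hp with h | h
    · exact hF₀gcd p h
    · obtain ⟨j, _, rfl⟩ := Finset.mem_image.mp h
      exact hcvgcd j
  have hFσsol : isol Fσ = Q := by
    ext x
    simp only [isol, Set.mem_setOf_eq, hQdef, Set.mem_inter_iff]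
    constructor
    · intro hx
      constructor
      · rw [← hF₀]
        exact fun p hp => hx p (Finset.mem_union_left _ hp)
      · intro i
        have := hx (cvec i, 0) (Finset.mem_union_right _
          (Finset.mem_image.mpr ⟨i, Finset.mem_univ i, rfl⟩))
        rw [hcv] at this
        simp only at this
        linarith
    · rintro ⟨hxP, hxO⟩ p hp
      rcases Finset.mem_union.mp hp with h | h
      · rw [← hF₀] at hxP
        exact hxP p h
      · obtain ⟨j, _, rfl⟩ := Finset.mem_image.mp h
        rw [hcv]
        have := hxO j
        simp only
        linarith
  -- prune
  obtain ⟨M, hMsub, hMsol, hMirr⟩ := prune_system Fσ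
  have hMQ : isol M = Q := hMsol.trans hFσsol
  have hgcdM : ∀ p ∈ M, Finset.univ.gcd p.1 = 1 := fun p hp => hgcdFσ p (hMsub hp)
  have hMne0 : ∀ p ∈ M, intCast p.1 ≠ 0 := fun p hp => intCast_ne_zero_of_gcd (hgcdM p hp)
  -- strictly feasible point
  obtain ⟨ε, hε, hball⟩ := interior_ball h0
  set x₀ : Fin d → ℝ := (ε/2) • σ with hx₀def
  have hx₀n : ‖x₀‖ ≤ ε/2 := by
    rw [hx₀def]
    refine (pi_norm_le_iff_of_nonneg (by linarith)).mpr fun i => ?_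
    simp only [Pi.smul_apply, smul_eq_mul, Real.norm_eq_abs, abs_mul]
    have : |σ i| = 1 := by rcases hσ i with h | h <;> rw [h] <;> norm_num
    rw [this, mul_one, abs_of_pos (by linarith)]
  have hx₀strict : ∀ q ∈ Fσ, dot (intCast q.1) x₀ < q.2 := by
    intro q hq
    rcases Finset.mem_union.mp hq with h | h
    · -- a P-constraint: use interior
      have hqne : intCast q.1 ≠ 0 := intCast_ne_zero_of_gcd (hF₀gcd q h)
      set κ : ℝ := (ε/4) / (‖intCast q.1‖ + 1) with hκ
      have hκpos : 0 < κ := by rw [hκ]; positivity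
      have hy : x₀ + κ • intCast q.1 ∈ P := by
        apply hball
        calc ‖x₀ + κ • intCast q.1‖ ≤ ‖x₀‖ + ‖κ • intCast q.1‖ := norm_add_le _ _
          _ ≤ ε/2 + κ * ‖intCast q.1‖ := by
              have hns : ‖κ • intCast q.1‖ = κ * ‖intCast q.1‖ := by
                rw [norm_smul]
                rw [show ‖κ‖ = κ from by rw [Real.norm_eq_abs]; exact abs_of_pos hκpos]
              rw [hns]
              linarith [hx₀n]
          _ < ε := by
              have : κ * ‖intCast q.1‖ ≤ κ * (‖intCast q.1‖ + 1) := by nlinarith [hκpos]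
              have h2 : κ * (‖intCast q.1‖ + 1) = ε/4 := by
                rw [hκ]; field_simp
              nlinarith
      rw [← hF₀] at hy
      have hthis := hy q h
      rw [dot_add, dot_smul, dot_smul] at hthis
      rw [hx₀def, dot_smul]
      nlinarith [dot_self_pos hqne, hκpos, mul_pos hκpos (dot_self_pos hqne)]
    · obtain ⟨j, _, rfl⟩ := Finset.mem_image.mp h
      rw [hcv]
      simp only [hx₀def, Pi.smul_apply, smul_eq_mul]
      have h1 : -(σ j) * (ε/2 * σ j) = -(ε/2) * (σ j * σ j) := by ring
      rw [h1, sign_sq hσ]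
      linarith
  -- width consequences for members of M
  have hfacetM : ∀ p ∈ M, IsFacetIneq Q p.1 p.2 := by
    intro p hp
    obtain ⟨z, hz1, hz2⟩ := hMirr p hp
    have := irredundant_facet hp (hMne0 p hp)
      (fun q hq => hx₀strict q (hMsub hq)) hz1 hz2
    rwa [hMQ] at this
  have hvalidM : ∀ p ∈ M, ∀ x ∈ Q, dot (intCast p.1) x ≤ p.2 := by
    intro p hp x hx
    rw [← hMQ] at hx
    exact hx p hp
  -- values of an upper-type member
  have hupper : ∀ p ∈ M, (∀ i, 0 ≤ σ i * ((p.1 i : ℤ):ℝ)) →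
      (∀ x ∈ Q, dot (intCast p.1) x ≤ 1) ∧ 1 ≤ p.2 := by
    intro p hp hup
    have hw := hwidth p.1 p.2 (hgcdM p hp) (hfacetM p hp)
    set S : Set ℝ := (fun x => dot (intCast p.1) x) '' Q with hSdef
    have hSne : S.Nonempty := ⟨_, 0, h0Q, rfl⟩
    have hScomp : IsCompact S := hQcomp.image (continuous_dot (intCast p.1))
    have hvnn : ∀ y ∈ S, 0 ≤ y := by
      rintro y ⟨x, hx, rfl⟩
      show 0 ≤ dot (intCast p.1) x
      unfold dot
      have hterm : ∀ i, (intCast p.1) i * x i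
          = (σ i * ((p.1 i:ℤ):ℝ)) * (σ i * x i) := fun i => by
        rw [intCastVec_apply,
          show (σ i * ((p.1 i:ℤ):ℝ)) * (σ i * x i)
            = (σ i * σ i) * (((p.1 i:ℤ):ℝ) * x i) from by ring, sign_sq hσ, one_mul]
      rw [Finset.sum_congr rfl fun i _ => hterm i]
      exact Finset.sum_nonneg fun i _ => mul_nonneg (hup i) (hx.2 i)
    have h0S : (0:ℝ) ∈ S := ⟨0, h0Q, by show dot (intCast p.1) 0 = 0; exact dot_zero _⟩
    have hinf : sInf S = 0 := sInf_eq_zero' h0S hvnn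
    have hsup : sSup S = 1 := by
      have hws : sSup S - sInf S = 1 := hw
      rw [hinf] at hws
      linarith
    have hble : ∀ x ∈ Q, dot (intCast p.1) x ≤ 1 := by
      intro x hx
      rw [← hsup]
      exact le_csSup hScomp.bddAbove ⟨x, hx, rfl⟩
    refine ⟨hble, ?_⟩
    have : sSup S ≤ p.2 := csSup_le hSne (by
      rintro y ⟨x, hx, rfl⟩
      exact hvalidM p hp x hx)
    rw [hsup] at this
    exact this
  -- a violated lower-type member is impossible for a point of the orthant
  have hlower : ∀ p ∈ M, (∃ j, σ j * ((p.1 j : ℤ):ℝ) < 0) →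
      ∀ z, (∀ i, 0 ≤ σ i * z i) → dot (intCast p.1) z ≤ p.2 := by
    intro p hp ⟨j, hj⟩ z hz
    have hvalid' : ∀ x ∈ P ∩ {x | ∀ i, 0 ≤ σ i * x i}, dot (intCast p.1) x ≤ p.2 := by
      rw [← hQdef]; exact hvalidM p hp
    have htz := touch_coord_zero hlab hσ hvalid' hj
    have hfr := (hfacetM p hp).2
    rw [hQdef] at hfr
    obtain ⟨c, hc⟩ := facet_coord_support hfr hd1 (by rw [← hQdef] at htz; exact htz)
    have hzero : ∀ i, i ≠ j → p.1 i = 0 := by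
      intro i hij
      have h1 := congrFun hc i
      rw [intCastVec_apply, Pi.smul_apply, Pi.single_eq_of_ne hij] at h1
      simp only [smul_eq_mul, mul_zero] at h1
      exact_mod_cast h1
    have haj : p.1 j = 1 ∨ p.1 j = -1 := gcd_unit_of_support (hgcdM p hp) hzero
    have hajr : ((p.1 j : ℤ) : ℝ) = - σ j := by
      rcases haj with h | h <;> rcases hσ j with h' | h'
      · exfalso; rw [h, h'] at hj; norm_num at hj
      · rw [h, h']; norm_num
      · rw [h, h']; norm_num
      · exfalso; rw [h, h'] at hj; norm_num at hj
    have hdotz : dot (intCast p.1) z = - (σ j * z j) := by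
      unfold dot
      rw [Finset.sum_eq_single j]
      · rw [intCastVec_apply, hajr]; ring
      · intro i _ hij; rw [intCastVec_apply, hzero i hij]; norm_num
      · intro h; exact absurd (Finset.mem_univ j) h
    have hp2 : 0 ≤ p.2 := by
      have := hvalidM p hp 0 h0Q
      rw [dot_zero] at this
      exact this
    rw [hdotz]
    have := hz j
    linarith
  -- assemble B
  set B : Finset (Fin d → ℤ) :=
    (M.filter (fun p => ∀ i, 0 ≤ σ i * ((p.1 i : ℤ):ℝ))).image Prod.fst with hB
  refine ⟨B, ?_, ?_, ?_⟩
  · intro a ha x hx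
    obtain ⟨p, hpf, rfl⟩ := Finset.mem_image.mp ha
    obtain ⟨hpM, hpu⟩ := Finset.mem_filter.mp hpf
    exact (hupper p hpM hpu).1 x (by rw [hQdef] at hx; exact hx)
  · intro a ha
    obtain ⟨p, hpf, rfl⟩ := Finset.mem_image.mp ha
    exact (Finset.mem_filter.mp hpf).2
  · intro z hzO hzB
    by_contra hzP
    have hzQ : z ∉ Q := fun h => hzP h.1
    rw [← hMQ] at hzQ
    simp only [isol, Set.mem_setOf_eq, not_forall] at hzQ
    obtain ⟨p, hpM, hpv⟩ := hzQ
    push_neg at hpv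
    by_cases hcase : ∃ j, σ j * ((p.1 j : ℤ):ℝ) < 0
    · exact absurd (hlower p hpM hcase z hzO) (not_le.mpr hpv)
    · push_neg at hcase
      have hpB : p.1 ∈ B :=
        Finset.mem_image.mpr ⟨p, Finset.mem_filter.mpr ⟨hpM, hcase⟩, rfl⟩
      have h1 := hzB p.1 hpB
      have h2 := (hupper p hpM hcase).2
      linarith

end Part9

/-- a locally anti-blocking lattice polytope with `0` in its
interior is reflexive iff all its orthant pieces are compressed (facet width
one). -/
theorem stmt6 {d : ℕ} (P : Set (Fin d → ℝ)) (hlat : IsLatticePolytope P)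
    (h0 : 0 ∈ interior P)
    (hlab : ∀ σ : Fin d → ℝ, IsSignVec σ →
      IsAntiBlocking ((sflip σ '' P) ∩ nonnegOrthant d)) :
    IsReflexive P ↔
      ∀ σ : Fin d → ℝ, IsSignVec σ →
        HasFacetWidthOne (P ∩ {x | ∀ i, 0 ≤ σ i * x i}) := by
  classical
  obtain ⟨V, hVne, hP⟩ := hlat
  constructor
  · intro hrefl σ hσ
    exact forward_width hP hVne h0 hlab hrefl.2 hσ
  · intro hwidth
    refine ⟨h0, ?_⟩
    rcases Nat.eq_zero_or_pos d with hd0 | hd1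
    · subst hd0
      refine ⟨∅, ?_⟩
      have hall : ∀ x : Fin 0 → ℝ, x ∈ P := by
        intro x
        have h0P : (0 : Fin 0 → ℝ) ∈ P := interior_subset h0
        have hx0 : x = 0 := funext fun i => i.elim0
        rwa [hx0]
      ext x
      constructor
      · intro _ a ha
        exact absurd ha (Finset.notMem_empty a)
      · intro _
        exact hall x
    · obtain ⟨S, hS⟩ := exists_qrep hP
      obtain ⟨F₀, hF₀, hF₀gcd⟩ := ratsys_to_int hd1 hS (interior_subset h0)
      have hsv : ∀ s : Fin d → Bool, IsSignVec (fun i => if s i then (1:ℝ) else -1) := by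
        intro s i
        by_cases h : s i <;> simp [h]
      have hBs : ∀ s : Fin d → Bool, ∃ B : Finset (Fin d → ℤ),
          (∀ a ∈ B, ∀ x ∈ P ∩ {x | ∀ i, 0 ≤ (if s i then (1:ℝ) else -1) * x i},
            dot (intCast a) x ≤ 1) ∧
          (∀ a ∈ B, ∀ i, 0 ≤ (if s i then (1:ℝ) else -1) * ((a i : ℤ):ℝ)) ∧
          (∀ z, (∀ i, 0 ≤ (if s i then (1:ℝ) else -1) * z i) →
            (∀ a ∈ B, dot (intCast a) z ≤ 1) → z ∈ P) := fun s =>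
        backward_sigma hP h0 hlab hd1 hF₀ hF₀gcd (hsv s) (hwidth _ (hsv s))
      choose Bf hB1 hB2 hB3 using hBs
      refine ⟨Finset.univ.biUnion Bf, ?_⟩
      ext x
      simp only [Set.mem_setOf_eq]
      constructor
      · intro hxP a ha
        obtain ⟨s, _, haB⟩ := Finset.mem_biUnion.mp ha
        set σs : Fin d → ℝ := fun i => if s i then (1:ℝ) else -1 with hσs
        set y : Fin d → ℝ := fun i => if 0 ≤ σs i * x i then x i else 0 with hy
        have hyP : y ∈ P := by
          apply trunc_mem hlab hxP
          intro i
          by_cases h : 0 ≤ σs i * x i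
          · left; rw [hy]; simp only [if_pos h]
          · right; rw [hy]; simp only [if_neg h]
        have hyO : ∀ i, 0 ≤ σs i * y i := by
          intro i
          by_cases h : 0 ≤ σs i * x i
          · rw [hy]; simp only [if_pos h]; exact h
          · rw [hy]; simp only [if_neg h, mul_zero]
            exact le_refl 0
        have h1 : dot (intCast a) x ≤ dot (intCast a) y := by
          unfold dot
          refine Finset.sum_le_sum fun i _ => ?_
          by_cases h : 0 ≤ σs i * x i
          · rw [hy]; simp only [if_pos h]; exact le_refl _
          · rw [hy]; simp only [if_neg h, mul_zero]
            push_neg at h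
            have hai := hB2 s a haB i
            have hsq : σs i * σs i = 1 := sign_sq (hsv s) i
            have hterm : (intCast a) i * x i = (σs i * ((a i:ℤ):ℝ)) * (σs i * x i) := by
              rw [intCastVec_apply, show (σs i * ((a i:ℤ):ℝ)) * (σs i * x i)
                = (σs i * σs i) * (((a i:ℤ):ℝ) * x i) from by ring, hsq, one_mul]
            rw [hterm]
            exact mul_nonpos_of_nonneg_of_nonpos hai (le_of_lt h)
        have h2 := hB1 s a haB y ⟨hyP, hyO⟩
        linarith
      · intro hx
        set s : Fin d → Bool := fun i => decide (0 ≤ x i) with hs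
        have hxO : ∀ i, 0 ≤ (if s i then (1:ℝ) else -1) * x i := by
          intro i
          by_cases h : 0 ≤ x i
          · have hsi : s i = true := by rw [hs]; simp [h]
            rw [if_pos hsi]
            linarith
          · have hsi : ¬ (s i = true) := by rw [hs]; simp [h]
            rw [if_neg hsi]
            push_neg at h
            nlinarith
        exact hB3 s x hxO
          (fun a ha => hx a (Finset.mem_biUnion.mpr ⟨s, Finset.mem_univ s, ha⟩))
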